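/- arXiv:1412.1125 — 16 statements merged into one kernel-verified Lean document; each statement's English description precedes it below -/
import Mathlib

section
/- Let L, R : ℝ² → ℝ³ be continuously differentiable maps; write L = (L̃, L_Z) and R = (R̃, R_Z), where L̃, R̃ : ℝ² → ℝ² are the planar (first two) components and L_Z, R_Z the third components. Assume L(1,v) = R(0,v) for every v ∈ [0,1], and that for every v ∈ [0,1] both ⟨∂_u L̃(1,v), ∂_v L̃(1,v)⟩ > 0 and ⟨∂_u R̃(0,v), ∂_v R̃(0,v)⟩ > 0. Then the following are equivalent: (i) the patches join G¹-smoothly along the common edge, i.e. there exist functions l, r, c : [0,1] → ℝ such that for every v ∈ [0,1] one has ∂_u L(1,v)·l(v) + ∂_u R(0,v)·r(v) + ∂_v L(1,v)·c(v) = 0 in ℝ³, l(v)·r(v) < 0, and the ℝ³ cross product of ∂_u L(1,v) and ∂_v L(1,v) is nonzero; (ii) for every v ∈ [0,1], ∂_u L_Z(1,v)·l*(v) + ∂_u R_Z(0,v)·r*(v) + ∂_v L_Z(1,v)·c*(v) = 0, where the conventional weight functions are c*(v) = ⟨∂_u L̃(1,v), ∂_u R̃(0,v)⟩, l*(v) =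 ⟨∂_u R̃(0,v), ∂_v L̃(1,v)⟩ and r*(v) = −⟨∂_u L̃(1,v), ∂_v L̃(1,v)⟩. -/
noncomputable section

/-- z-component of the cross product of two planar vectors. -/
def cross2 (a b : ℝ × ℝ) : ℝ := a.1 * b.2 - a.2 * b.1

/-- cross product in ℝ³ (represented as `ℝ × ℝ × ℝ`). -/
def cross3 (a b : ℝ × ℝ × ℝ) : ℝ × ℝ × ℝ :=
  (a.2.1 * b.2.2 - a.2.2 * b.2.1,
   a.2.2 * b.1 - a.1 * b.2.2,
   a.1 * b.2.1 - a.2.1 * b.1)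

/-- partial derivative with respect to the first variable. -/
def pdu {E : Type*} [NormedAddCommGroup E] [NormedSpace ℝ E]
    (F : ℝ × ℝ → E) (p : ℝ × ℝ) : E := fderiv ℝ F p (1, 0)

/-- partial derivative with respect to the second variable. -/
def pdv {E : Type*} [NormedAddCommGroup E] [NormedSpace ℝ E]
    (F : ℝ × ℝ → E) (p : ℝ × ℝ) : E := fderiv ℝ F p (0, 1)

/-- planar (first two) components of an ℝ³-valued map. -/
def planar (F : ℝ × ℝ → ℝ × ℝ × ℝ) : ℝ × ℝ → ℝ × ℝ := fun p => ((F p).1, (F p).2.1)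

/-- third (Z) component of an ℝ³-valued map. -/
def zcomp (F : ℝ × ℝ → ℝ × ℝ × ℝ) : ℝ × ℝ → ℝ := fun p => (F p).2.2

lemma fderiv_planar_apply (F : ℝ×ℝ → ℝ×ℝ×ℝ) (hF : ContDiff ℝ 1 F) (p w : ℝ × ℝ) :
    fderiv ℝ (planar F) p w = ((fderiv ℝ F p w).1, (fderiv ℝ F p w).2.1) := by
  have hD := (hF.differentiable one_ne_zero p).hasFDerivAt
  have h := HasFDerivAt.prodMk (hD.fst) (hD.snd.fst)
  unfold planar
  rw [h.fderiv]
  rfl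

lemma fderiv_zcomp_apply (F : ℝ×ℝ → ℝ×ℝ×ℝ) (hF : ContDiff ℝ 1 F) (p w : ℝ × ℝ) :
    fderiv ℝ (zcomp F) p w = (fderiv ℝ F p w).2.2 := by
  have hD := (hF.differentiable one_ne_zero p).hasFDerivAt
  unfold zcomp
  rw [(hD.snd.snd).fderiv]
  rfl

lemma pdv_match (L R : ℝ × ℝ → ℝ × ℝ × ℝ) (hL : ContDiff ℝ 1 L) (hR : ContDiff ℝ 1 R)
    (hmatch : ∀ v ∈ Set.Icc (0:ℝ) 1, L (1, v) = R (0, v)) :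
    ∀ v ∈ Set.Icc (0:ℝ) 1, pdv L (1,v) = pdv R (0,v) := by
  intro v hv
  have hγL : HasDerivAt (fun t : ℝ => ((1:ℝ), t)) (0, 1) v :=
    HasDerivAt.prodMk (hasDerivAt_const v (1:ℝ)) (hasDerivAt_id v)
  have hγR : HasDerivAt (fun t : ℝ => ((0:ℝ), t)) (0, 1) v :=
    HasDerivAt.prodMk (hasDerivAt_const v (0:ℝ)) (hasDerivAt_id v)
  have hLd : HasDerivAt (fun t => L (1, t)) (fderiv ℝ L (1,v) (0,1)) v :=
    (hL.differentiable one_ne_zero (1,v)).hasFDerivAt.comp_hasDerivAt v hγL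
  have hRd : HasDerivAt (fun t => R (0, t)) (fderiv ℝ R (0,v) (0,1)) v :=
    (hR.differentiable one_ne_zero (0,v)).hasFDerivAt.comp_hasDerivAt v hγR
  have hg : HasDerivWithinAt (fun t => L (1,t) - R (0,t))
      (fderiv ℝ L (1,v) (0,1) - fderiv ℝ R (0,v) (0,1)) (Set.Icc 0 1) v :=
    (hLd.sub hRd).hasDerivWithinAt
  have hg0 : HasDerivWithinAt (fun t => L (1,t) - R (0,t)) 0 (Set.Icc 0 1) v := by
    refine (hasDerivWithinAt_const v _ (0 : ℝ × ℝ × ℝ)).congr (fun t ht => ?_) ?_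
    · simp [sub_eq_zero.mpr (hmatch t ht)]
    · simp [sub_eq_zero.mpr (hmatch v hv)]
  have hu := uniqueDiffOn_Icc (by norm_num : (0:ℝ) < 1) v hv
  exact sub_eq_zero.mp ((hg.derivWithin hu).symm.trans (hg0.derivWithin hu))

/-- G¹-smoothness of the concatenation of two patches is equivalent to the linear
equation on the Z-components with the conventional weight functions. -/
theorem stmt0
    (L R : ℝ × ℝ → ℝ × ℝ × ℝ)
    (hL : ContDiff ℝ 1 L) (hR : ContDiff ℝ 1 R)
    (hmatch : ∀ v ∈ Set.Icc (0:ℝ) 1, L (1, v) = R (0, v))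
    (hregL : ∀ v ∈ Set.Icc (0:ℝ) 1,
      0 < cross2 (pdu (planar L) (1, v)) (pdv (planar L) (1, v)))
    (hregR : ∀ v ∈ Set.Icc (0:ℝ) 1,
      0 < cross2 (pdu (planar R) (0, v)) (pdv (planar R) (0, v))) :
    (∃ l r c : ℝ → ℝ, ∀ v ∈ Set.Icc (0:ℝ) 1,
        l v • pdu L (1, v) + r v • pdu R (0, v) + c v • pdv L (1, v) = 0 ∧
        l v * r v < 0 ∧
        cross3 (pdu L (1, v)) (pdv L (1, v)) ≠ 0)
    ↔
    (∀ v ∈ Set.Icc (0:ℝ) 1,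
        pdu (zcomp L) (1, v) * cross2 (pdu (planar R) (0, v)) (pdv (planar L) (1, v))
      + pdu (zcomp R) (0, v) * (-(cross2 (pdu (planar L) (1, v)) (pdv (planar L) (1, v))))
      + pdv (zcomp L) (1, v) * cross2 (pdu (planar L) (1, v)) (pdu (planar R) (0, v)) = 0) := by
  have hCmatch := pdv_match L R hL hR hmatch
  constructor
  · rintro ⟨l, r, c, H⟩ v hv
    obtain ⟨heq, hlr, -⟩ := H v hv
    set A := pdu L (1, v) with hA
    set B := pdu R (0, v) with hB
    set C := pdv L (1, v) with hC
    have eA : pdu (planar L) (1,v) = (A.1, A.2.1) := fderiv_planar_apply L hL (1,v) (1,0)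
    have eB : pdu (planar R) (0,v) = (B.1, B.2.1) := fderiv_planar_apply R hR (0,v) (1,0)
    have eC : pdv (planar L) (1,v) = (C.1, C.2.1) := fderiv_planar_apply L hL (1,v) (0,1)
    have ezA : pdu (zcomp L) (1,v) = A.2.2 := fderiv_zcomp_apply L hL (1,v) (1,0)
    have ezB : pdu (zcomp R) (0,v) = B.2.2 := fderiv_zcomp_apply R hR (0,v) (1,0)
    have ezC : pdv (zcomp L) (1,v) = C.2.2 := fderiv_zcomp_apply L hL (1,v) (0,1)
    have e1 : l v * A.1 + r v * B.1 + c v * C.1 = 0 := by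
      have := congrArg Prod.fst heq; simpa using this
    have e2 : l v * A.2.1 + r v * B.2.1 + c v * C.2.1 = 0 := by
      have := congrArg (fun x : ℝ×ℝ×ℝ => x.2.1) heq; simpa using this
    have e3 : l v * A.2.2 + r v * B.2.2 + c v * C.2.2 = 0 := by
      have := congrArg (fun x : ℝ×ℝ×ℝ => x.2.2) heq; simpa using this
    have hl : l v ≠ 0 := by
      intro h; rw [h, zero_mul] at hlr; exact lt_irrefl 0 hlr
    rw [eA, eB, eC, ezA, ezB, ezC]
    simp only [cross2]
    have key : l v * (A.2.2 * ((B.1, B.2.1).1 * (C.1, C.2.1).2 - (B.1, B.2.1).2 * (C.1, C.2.1).1)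
        + B.2.2 * (-((A.1, A.2.1).1 * (C.1, C.2.1).2 - (A.1, A.2.1).2 * (C.1, C.2.1).1))
        + C.2.2 * ((A.1, A.2.1).1 * (B.1, B.2.1).2 - (A.1, A.2.1).2 * (B.1, B.2.1).1)) = 0 := by
      simp only
      linear_combination (B.1 * C.2.1 - B.2.1 * C.1) * e3
        - B.2.2 * (C.2.1 * e1 - C.1 * e2) + C.2.2 * (B.2.1 * e1 - B.1 * e2)
    exact (mul_eq_zero.mp key).resolve_left hl
  · intro H
    refine ⟨fun v => cross2 (pdu (planar R) (0,v)) (pdv (planar L) (1,v)),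
            fun v => -(cross2 (pdu (planar L) (1,v)) (pdv (planar L) (1,v))),
            fun v => cross2 (pdu (planar L) (1,v)) (pdu (planar R) (0,v)), ?_⟩
    intro v hv
    set A := pdu L (1, v) with hA
    set B := pdu R (0, v) with hB
    set C := pdv L (1, v) with hC
    have eA : pdu (planar L) (1,v) = (A.1, A.2.1) := fderiv_planar_apply L hL (1,v) (1,0)
    have eB : pdu (planar R) (0,v) = (B.1, B.2.1) := fderiv_planar_apply R hR (0,v) (1,0)
    have eC : pdv (planar L) (1,v) = (C.1, C.2.1) := fderiv_planar_apply L hL (1,v) (0,1)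
    have eCR : pdv (planar R) (0,v) = (C.1, C.2.1) := by
      have := fderiv_planar_apply R hR (0,v) (0,1)
      rw [show fderiv ℝ R (0,v) (0,1) = C from (hCmatch v hv).symm] at this
      exact this
    have ezA : pdu (zcomp L) (1,v) = A.2.2 := fderiv_zcomp_apply L hL (1,v) (1,0)
    have ezB : pdu (zcomp R) (0,v) = B.2.2 := fderiv_zcomp_apply R hR (0,v) (1,0)
    have ezC : pdv (zcomp L) (1,v) = C.2.2 := fderiv_zcomp_apply L hL (1,v) (0,1)
    have hp : 0 < A.1 * C.2.1 - A.2.1 * C.1 := by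
      have := hregL v hv; rw [eA, eC] at this; simpa [cross2] using this
    have hq : 0 < B.1 * C.2.1 - B.2.1 * C.1 := by
      have := hregR v hv; rw [eB, eCR] at this; simpa [cross2] using this
    have Hv := H v hv
    rw [eA, eB, eC, ezA, ezB, ezC] at Hv
    simp only [cross2] at Hv
    refine ⟨?_, ?_, ?_⟩
    · beta_reduce
      rw [eA, eB, eC]
      simp only [cross2]
      have hext : ∀ x : ℝ × ℝ × ℝ, x.1 = 0 → x.2.1 = 0 → x.2.2 = 0 → x = 0 := by
        rintro ⟨x1, x2, x3⟩ h1 h2 h3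
        simp_all
      apply hext
      · simp only [Prod.fst_add, Prod.smul_fst, smul_eq_mul, Prod.fst_zero]
        ring
      · simp only [Prod.fst_add, Prod.snd_add, Prod.smul_fst, Prod.smul_snd,
          smul_eq_mul, Prod.snd_zero, Prod.fst_zero]
        ring
      · simp only [Prod.snd_add, Prod.smul_snd, smul_eq_mul, Prod.snd_zero]
        linear_combination Hv
    · beta_reduce
      rw [eA, eB, eC]
      simp only [cross2]
      have h1 : (0:ℝ) < (B.1, B.2.1).1 * (C.1, C.2.1).2 - (B.1, B.2.1).2 * (C.1, C.2.1).1 := hq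
      have h2 : (0:ℝ) < (A.1, A.2.1).1 * (C.1, C.2.1).2 - (A.1, A.2.1).2 * (C.1, C.2.1).1 := hp
      exact mul_neg_of_pos_of_neg h1 (neg_lt_zero.mpr h2)
    · intro h
      have h3 := congrArg (fun x : ℝ×ℝ×ℝ => x.2.2) h
      simp only [cross3, Prod.snd_zero, Prod.fst_zero] at h3
      linarith
end
end

section
/- Let n ≥ 1 and m ≥ 1 be integers, and let ΔL_j, ΔR_j (j = 0,…,n), ΔC_j (j = 0,…,n−1), l_k, r_k (k = 0,…,2m−1) and c_k (k = 0,…,2m) be real numbers. Define on ℝ the functions L_u(v) = n·∑_{j=0}^{n} ΔL_j B^n_j(v), R_u(v) = n·∑_{j=0}^{n} ΔR_j B^n_j(v), L_v(v) = n·∑_{j=0}^{n−1} ΔC_j B^{n−1}_j(v), l(v) = ∑_{k=0}^{2m−1} l_k B^{2m−1}_k(v), r(v) = ∑_{k=0}^{2m−1} r_k B^{2m−1}_k(v), c(v) = ∑_{k=0}^{2m} c_k B^{2m}_k(v). Then L_u(v)l(v) + R_u(v)r(v) + L_v(v)c(v) = 0 for every v ∈ [0,1] if and only if for every s = 0,…,n+2m−1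 the linear equation "Eq(s)" holds: ∑_{j+k=s, 0≤j≤n, 0≤k≤2m−1} C(n,j)C(2m−1,k)(l_k ΔL_j + r_k ΔR_j) + ∑_{j+k=s, 0≤j≤n−1, 0≤k≤2m} C(n−1,j)C(2m,k) c_k ΔC_j = 0. -/
open Finset

/-- degree-`n` Bernstein polynomial `B^n_i`. -/
noncomputable def bern (n i : ℕ) (v : ℝ) : ℝ :=
  (n.choose i : ℝ) * v ^ i * (1 - v) ^ (n - i)

lemma conv (p q : ℕ) (f g : ℕ → ℝ) (v : ℝ) :
    (∑ j ∈ range (p+1), f j * bern p j v) * (∑ k ∈ range (q+1), g k * bern q k v)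
    = ∑ s ∈ range (p+q+1), (∑ j ∈ range (p+1), ∑ k ∈ range (q+1),
        if j + k = s then (p.choose j : ℝ) * (q.choose k : ℝ) * (f j * g k) else 0)
        * (v ^ s * (1-v) ^ (p+q-s)) := by
  rw [Finset.sum_mul_sum]
  symm
  simp only [Finset.sum_mul, ite_mul, zero_mul]
  rw [Finset.sum_comm]
  refine Finset.sum_congr rfl fun j hj => ?_
  rw [Finset.sum_comm]
  refine Finset.sum_congr rfl fun k hk => ?_
  rw [Finset.sum_ite_eq]
  have hjp : j ≤ p := Nat.lt_succ_iff.mp (Finset.mem_range.mp hj)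
  have hkq : k ≤ q := Nat.lt_succ_iff.mp (Finset.mem_range.mp hk)
  rw [if_pos (Finset.mem_range.mpr (by omega))]
  have h1 : v ^ (j + k) = v ^ j * v ^ k := pow_add v j k
  have h2 : (1-v) ^ (p + q - (j+k)) = (1-v) ^ (p-j) * (1-v) ^ (q-k) := by
    rw [← pow_add]; congr 1; omega
  simp only [bern, h1, h2]; ring

/-- The linearized G¹-continuity equation `L_u l + R_u r + L_v c = 0` on `[0,1]` is
equivalent to the system of `n + 2m` indexed linear equations "Eq(s)". -/
theorem stmt1 (n m : ℕ) (hn : 1 ≤ n) (hm : 1 ≤ m)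
    (ΔL ΔR ΔC l r c : ℕ → ℝ) :
    (∀ v ∈ Set.Icc (0:ℝ) 1,
        ((n : ℝ) * ∑ j ∈ range (n + 1), ΔL j * bern n j v) *
          (∑ k ∈ range (2 * m), l k * bern (2 * m - 1) k v)
      + ((n : ℝ) * ∑ j ∈ range (n + 1), ΔR j * bern n j v) *
          (∑ k ∈ range (2 * m), r k * bern (2 * m - 1) k v)
      + ((n : ℝ) * ∑ j ∈ range n, ΔC j * bern (n - 1) j v) *
          (∑ k ∈ range (2 * m + 1), c k * bern (2 * m) k v) = 0)
    ↔
    (∀ s, s ≤ n + 2 * m - 1 →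
        (∑ j ∈ range (n + 1), ∑ k ∈ range (2 * m),
          if j + k = s then
            (n.choose j : ℝ) * ((2 * m - 1).choose k : ℝ) * (l k * ΔL j + r k * ΔR j)
          else 0)
      + (∑ j ∈ range n, ∑ k ∈ range (2 * m + 1),
          if j + k = s then
            ((n - 1).choose j : ℝ) * ((2 * m).choose k : ℝ) * (c k * ΔC j)
          else 0) = 0) := by
  set A : ℕ → ℝ := fun s =>
        (∑ j ∈ range (n + 1), ∑ k ∈ range (2 * m),
          if j + k = s then
            (n.choose j : ℝ) * ((2 * m - 1).choose k : ℝ) * (l k * ΔL j + r k * ΔR j)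
          else 0)
      + (∑ j ∈ range n, ∑ k ∈ range (2 * m + 1),
          if j + k = s then
            ((n - 1).choose j : ℝ) * ((2 * m).choose k : ℝ) * (c k * ΔC j)
          else 0) with hA
  have hA' : ∀ s, A s =
        (∑ j ∈ range (n + 1), ∑ k ∈ range (2 * m),
          if j + k = s then
            (n.choose j : ℝ) * ((2 * m - 1).choose k : ℝ) * (l k * ΔL j + r k * ΔR j)
          else 0)
      + (∑ j ∈ range n, ∑ k ∈ range (2 * m + 1),
          if j + k = s then
            ((n - 1).choose j : ℝ) * ((2 * m).choose k : ℝ) * (c k * ΔC j)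
          else 0) := fun s => rfl
  have hq1 : 2 * m - 1 + 1 = 2 * m := by omega
  have hp2 : n - 1 + 1 = n := by omega
  have hN1 : n + (2 * m - 1) = n + 2 * m - 1 := by omega
  have hN2 : (n - 1) + 2 * m = n + 2 * m - 1 := by omega
  have key : ∀ v : ℝ,
      ((n : ℝ) * ∑ j ∈ range (n + 1), ΔL j * bern n j v) *
          (∑ k ∈ range (2 * m), l k * bern (2 * m - 1) k v)
      + ((n : ℝ) * ∑ j ∈ range (n + 1), ΔR j * bern n j v) *
          (∑ k ∈ range (2 * m), r k * bern (2 * m - 1) k v)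
      + ((n : ℝ) * ∑ j ∈ range n, ΔC j * bern (n - 1) j v) *
          (∑ k ∈ range (2 * m + 1), c k * bern (2 * m) k v)
      = (n : ℝ) * ∑ s ∈ range (n + 2 * m),
          A s * (v ^ s * (1 - v) ^ (n + 2 * m - 1 - s)) := by
    intro v
    have e1 := conv n (2 * m - 1) ΔL l v
    have e2 := conv n (2 * m - 1) ΔR r v
    have e3 := conv (n - 1) (2 * m) ΔC c v
    rw [hq1, hN1] at e1 e2
    rw [hp2, hN2] at e3
    have hrange : n + 2 * m - 1 + 1 = n + 2 * m := by omega
    rw [hrange] at e1 e2 e3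
    have hfac : ((n : ℝ) * ∑ j ∈ range (n + 1), ΔL j * bern n j v) *
          (∑ k ∈ range (2 * m), l k * bern (2 * m - 1) k v)
      + ((n : ℝ) * ∑ j ∈ range (n + 1), ΔR j * bern n j v) *
          (∑ k ∈ range (2 * m), r k * bern (2 * m - 1) k v)
      + ((n : ℝ) * ∑ j ∈ range n, ΔC j * bern (n - 1) j v) *
          (∑ k ∈ range (2 * m + 1), c k * bern (2 * m) k v)
      = (n : ℝ) * (((∑ j ∈ range (n + 1), ΔL j * bern n j v) *
          (∑ k ∈ range (2 * m), l k * bern (2 * m - 1) k v))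
        + ((∑ j ∈ range (n + 1), ΔR j * bern n j v) *
          (∑ k ∈ range (2 * m), r k * bern (2 * m - 1) k v))
        + ((∑ j ∈ range n, ΔC j * bern (n - 1) j v) *
          (∑ k ∈ range (2 * m + 1), c k * bern (2 * m) k v))) := by ring
    rw [hfac, e1, e2, e3]
    congr 1
    rw [← Finset.sum_add_distrib, ← Finset.sum_add_distrib]
    refine Finset.sum_congr rfl fun s hs => ?_
    rw [hA' s]
    simp only [← add_mul]
    congr 1
    rw [← Finset.sum_add_distrib]
    congr 1
    · refine Finset.sum_congr rfl fun j hj => ?_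
      rw [← Finset.sum_add_distrib]
      refine Finset.sum_congr rfl fun k hk => ?_
      split_ifs <;> ring
    · refine Finset.sum_congr rfl fun j hj => Finset.sum_congr rfl fun k hk => ?_
      split_ifs <;> ring
  constructor
  · intro H s hs
    have hsum0 : ∀ v ∈ Set.Icc (0:ℝ) 1,
        ∑ t ∈ range (n + 2 * m), A t * (v ^ t * (1 - v) ^ (n + 2 * m - 1 - t)) = 0 := by
      intro v hv
      have h := H v hv
      rw [key v] at h
      have hn' : (n : ℝ) ≠ 0 := by positivity
      exact (mul_eq_zero.mp h).resolve_left hn'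
    set P : Polynomial ℝ := ∑ t ∈ range (n + 2 * m), Polynomial.monomial t (A t) with hP
    have hPeval : ∀ x : ℝ, 0 ≤ x → P.eval x = 0 := by
      intro x hx
      have hx1 : (0:ℝ) < 1 + x := by linarith
      have hx1' : (1 + x) ≠ 0 := ne_of_gt hx1
      set v : ℝ := x / (1 + x) with hv
      have hv0 : 0 ≤ v := div_nonneg hx (le_of_lt hx1)
      have hv1 : v ≤ 1 := by
        rw [hv, div_le_one hx1]; linarith
      have h1v : 1 - v = 1 / (1 + x) := by
        rw [hv]; field_simp; ring
      have hz := hsum0 v ⟨hv0, hv1⟩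
      have hmul : (1 + x) ^ (n + 2 * m - 1) *
            ∑ t ∈ range (n + 2 * m), A t * (v ^ t * (1 - v) ^ (n + 2 * m - 1 - t))
          = P.eval x := by
        rw [Finset.mul_sum, hP, Polynomial.eval_finset_sum]
        refine Finset.sum_congr rfl fun t ht => ?_
        have htN : t ≤ n + 2 * m - 1 := by
          have := Finset.mem_range.mp ht; omega
        rw [Polynomial.eval_monomial, hv, h1v, div_pow, div_pow, one_pow]
        rw [show (1 + x) ^ (n + 2 * m - 1) = (1 + x) ^ t * (1 + x) ^ (n + 2 * m - 1 - t) by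
          rw [← pow_add]; congr 1; omega]
        field_simp
      rw [← hmul, hz, mul_zero]
    have hP0 : P = 0 := by
      apply Polynomial.eq_zero_of_infinite_isRoot
      exact (Set.Ici_infinite (0:ℝ)).mono fun x hx => hPeval x hx
    have hcoeff : A s = 0 := by
      have hc : P.coeff s = A s := by
        rw [hP, Polynomial.finset_sum_coeff]
        simp only [Polynomial.coeff_monomial]
        rw [Finset.sum_ite_eq' (range (n + 2 * m)) s A]
        rw [if_pos (Finset.mem_range.mpr (by omega))]
      rw [← hc, hP0, Polynomial.coeff_zero]
    exact hcoeff
  · intro H v hv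
    rw [key v]
    have hz : ∑ s ∈ range (n + 2 * m), A s * (v ^ s * (1 - v) ^ (n + 2 * m - 1 - s)) = 0 := by
      apply Finset.sum_eq_zero
      intro s hs
      have h0 : A s = 0 := by
        rw [hA' s]; exact H s (by have := Finset.mem_range.mp hs; omega)
      rw [h0, zero_mul]
    rw [hz, mul_zero]
end

section
/- Let Ã, B̃, C̃, D̃ ∈ ℝ² be the vertices of a strictly convex quadrilateral listed counterclockwise, and let P̃(u,v) = Ã(1−u)(1−v) + B̃u(1−v) + C̃uv + D̃(1−u)v be its bilinear parametrisation. Then: (i) the determinant of the Jacobian of P̃ equals det J(u,v) = ⟨B̃−Ã, C̃−D̃⟩u + ⟨C̃−B̃, D̃−Ã⟩v + ⟨B̃−Ã, D̃−Ã⟩; (ii) det J(u,v) > 0 for every (u,v) ∈ [0,1]²; (iii) P̃ is injective on [0,1]². Hence the bilinear in-plane parametrisation of a strictly convex planar quadrilateral element is regular. -/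
noncomputable section

/-- bilinear parametrisation of the quadrilateral with vertices `A B C D`. -/
def bilin (A B C D : ℝ × ℝ) (p : ℝ × ℝ) : ℝ × ℝ :=
  ((1 - p.1) * (1 - p.2)) • A + (p.1 * (1 - p.2)) • B + (p.1 * p.2) • C + ((1 - p.1) * p.2) • D

lemma pdu_pdv_bilin (A B C D : ℝ × ℝ) (u v : ℝ) :
    pdu (bilin A B C D) (u, v) = (1 - v) • (B - A) + v • (C - D) ∧
    pdv (bilin A B C D) (u, v) = (1 - u) • (D - A) + u • (C - B) := by
  have h1u : HasFDerivAt (fun p : ℝ×ℝ => 1 - p.1) (0 - ContinuousLinearMap.fst ℝ ℝ ℝ) (u,v) :=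
    (hasFDerivAt_const (1:ℝ) _).sub hasFDerivAt_fst
  have h1v : HasFDerivAt (fun p : ℝ×ℝ => 1 - p.2) (0 - ContinuousLinearMap.snd ℝ ℝ ℝ) (u,v) :=
    (hasFDerivAt_const (1:ℝ) _).sub hasFDerivAt_snd
  have hd := ((((h1u.mul h1v).smul_const A).add
      ((hasFDerivAt_fst.mul h1v).smul_const B)).add
      ((hasFDerivAt_fst.mul hasFDerivAt_snd).smul_const C)).add
      ((h1u.mul hasFDerivAt_snd).smul_const D)
  have hd' : HasFDerivAt (bilin A B C D) _ (u,v) := hd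
  constructor
  · rw [pdu, hd'.fderiv]
    simp [smul_smul]
    module
  · rw [pdv, hd'.fderiv]
    simp [smul_smul]
    module

/-- For a strictly convex planar quadrilateral, the bilinear in-plane parametrisation
is regular: explicit Jacobian determinant, its positivity on the unit square, and
injectivity on the unit square. -/
theorem stmt2 (A B C D : ℝ × ℝ)
    (h1 : 0 < cross2 (B - A) (C - B)) (h2 : 0 < cross2 (C - B) (D - C))
    (h3 : 0 < cross2 (D - C) (A - D)) (h4 : 0 < cross2 (A - D) (B - A)) :
    (∀ u v : ℝ,
        cross2 (pdu (bilin A B C D) (u, v)) (pdv (bilin A B C D) (u, v))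
          = cross2 (B - A) (C - D) * u + cross2 (C - B) (D - A) * v + cross2 (B - A) (D - A)) ∧
    (∀ p ∈ Set.Icc ((0:ℝ), (0:ℝ)) (1, 1),
        0 < cross2 (pdu (bilin A B C D) p) (pdv (bilin A B C D) p)) ∧
    Set.InjOn (bilin A B C D) (Set.Icc ((0:ℝ), (0:ℝ)) (1, 1)) := by
  simp only [cross2, Prod.fst_sub, Prod.snd_sub] at h1 h2 h3 h4
  have hJ : ∀ u v : ℝ,
      cross2 (pdu (bilin A B C D) (u, v)) (pdv (bilin A B C D) (u, v))
        = cross2 (B - A) (C - D) * u + cross2 (C - B) (D - A) * v + cross2 (B - A) (D - A) := by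
    intro u v
    rw [(pdu_pdv_bilin A B C D u v).1, (pdu_pdv_bilin A B C D u v).2]
    simp only [cross2, Prod.fst_add, Prod.snd_add, Prod.smul_fst, Prod.smul_snd,
      Prod.fst_sub, Prod.snd_sub, smul_eq_mul]
    ring
  have hpos : ∀ p ∈ Set.Icc ((0:ℝ), (0:ℝ)) (1, 1),
      0 < cross2 (pdu (bilin A B C D) p) (pdv (bilin A B C D) p) := by
    rintro ⟨u, v⟩ hp
    simp only [Set.mem_Icc, Prod.le_def] at hp
    obtain ⟨⟨hu0, hv0⟩, hu1, hv1⟩ := hp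
    rw [hJ u v]
    simp only [cross2, Prod.fst_sub, Prod.snd_sub]
    rcases le_total u (1/2) with hu | hu <;> rcases le_total v (1/2) with hv | hv
    · nlinarith [mul_pos (mul_pos (show (0:ℝ) < 1 - u by linarith) (show (0:ℝ) < 1 - v by linarith)) h4,
        mul_nonneg (mul_nonneg hu0 (show (0:ℝ) ≤ 1 - v by linarith)) h1.le,
        mul_nonneg (mul_nonneg (show (0:ℝ) ≤ 1 - u by linarith) hv0) h3.le,
        mul_nonneg (mul_nonneg hu0 hv0) h2.le]
    · nlinarith [mul_pos (mul_pos (show (0:ℝ) < 1 - u by linarith) (show (0:ℝ) < v by linarith)) h3,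
        mul_nonneg (mul_nonneg hu0 (show (0:ℝ) ≤ 1 - v by linarith)) h1.le,
        mul_nonneg (mul_nonneg (show (0:ℝ) ≤ 1 - u by linarith) (show (0:ℝ) ≤ 1 - v by linarith)) h4.le,
        mul_nonneg (mul_nonneg hu0 hv0) h2.le]
    · nlinarith [mul_pos (mul_pos (show (0:ℝ) < u by linarith) (show (0:ℝ) < 1 - v by linarith)) h1,
        mul_nonneg (mul_nonneg (show (0:ℝ) ≤ 1 - u by linarith) (show (0:ℝ) ≤ 1 - v by linarith)) h4.le,
        mul_nonneg (mul_nonneg (show (0:ℝ) ≤ 1 - u by linarith) hv0) h3.le,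
        mul_nonneg (mul_nonneg hu0 hv0) h2.le]
    · nlinarith [mul_pos (mul_pos (show (0:ℝ) < u by linarith) (show (0:ℝ) < v by linarith)) h2,
        mul_nonneg (mul_nonneg (show (0:ℝ) ≤ 1 - u by linarith) (show (0:ℝ) ≤ 1 - v by linarith)) h4.le,
        mul_nonneg (mul_nonneg hu0 (show (0:ℝ) ≤ 1 - v by linarith)) h1.le,
        mul_nonneg (mul_nonneg (show (0:ℝ) ≤ 1 - u by linarith) hv0) h3.le]
  refine ⟨hJ, hpos, ?_⟩
  rintro ⟨u, v⟩ hp ⟨s, t⟩ hq h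
  simp only [Set.mem_Icc, Prod.le_def] at hp hq
  obtain ⟨⟨hu0, hv0⟩, hu1, hv1⟩ := hp
  obtain ⟨⟨hs0, ht0⟩, hs1, ht1⟩ := hq
  have hmid : ((u + s) / 2, (v + t) / 2) ∈ Set.Icc ((0:ℝ), (0:ℝ)) (1, 1) := by
    simp only [Set.mem_Icc, Prod.le_def]
    refine ⟨⟨by linarith, by linarith⟩, by linarith, by linarith⟩
  have hx := hpos _ hmid
  rw [hJ ((u + s) / 2) ((v + t) / 2)] at hx
  simp only [cross2, Prod.fst_sub, Prod.snd_sub] at hx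
  simp only [bilin, Prod.ext_iff, Prod.fst_add, Prod.snd_add, Prod.smul_fst, Prod.smul_snd,
    smul_eq_mul] at h
  obtain ⟨e1, e2⟩ := h
  set Δ : ℝ := (B.1 - A.1) * (C.2 - D.2) * ((u + s) / 2) - (B.2 - A.2) * (C.1 - D.1) * ((u + s) / 2)
      + ((C.1 - B.1) * (D.2 - A.2) * ((v + t) / 2) - (C.2 - B.2) * (D.1 - A.1) * ((v + t) / 2))
      + ((B.1 - A.1) * (D.2 - A.2) - (B.2 - A.2) * (D.1 - A.1)) with hΔ
  have hΔpos : 0 < Δ := by rw [hΔ]; linarith [hx]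
  have hdu : (u - s) * Δ = 0 := by
    rw [hΔ]
    linear_combination ((D.2 - A.2) + ((u + s) / 2) * (A.2 - B.2 + C.2 - D.2)) * e1
      - ((D.1 - A.1) + ((u + s) / 2) * (A.1 - B.1 + C.1 - D.1)) * e2
  have hdv : (v - t) * Δ = 0 := by
    rw [hΔ]
    linear_combination ((B.1 - A.1) + ((v + t) / 2) * (A.1 - B.1 + C.1 - D.1)) * e2
      - ((B.2 - A.2) + ((v + t) / 2) * (A.2 - B.2 + C.2 - D.2)) * e1
  have hus : u = s := by
    rcases mul_eq_zero.1 hdu with h | h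
    · linarith
    · exact absurd h (ne_of_gt hΔpos)
  have hvt : v = t := by
    rcases mul_eq_zero.1 hdv with h | h
    · linarith
    · exact absurd h (ne_of_gt hΔpos)
  simp [hus, hvt]
end
end

section
/- Let k ≥ 3, let ẽ_j ∈ ℝ² (indices j taken cyclically modulo k) satisfy ⟨ẽ_j, ẽ_{j+1}⟩ ≠ 0 for every j, and let z_j ∈ ℝ; set ē_j = (ẽ_j, z_j) ∈ ℝ³. Then the following are equivalent: (i) for every j, the determinant of the 3×3 matrix with rows ē_{j−1}, ē_j, ē_{j+1} vanishes, i.e. ⟨ẽ_j, ẽ_{j+1}⟩·z_{j−1} − ⟨ẽ_{j−1}, ẽ_{j+1}⟩·z_j + ⟨ẽ_{j−1}, ẽ_j⟩·z_{j+1} = 0; (ii) all the tangent vectors ē_j are coplanar, namely there exists w ∈ ℝ² such that z_j equals the dot product of w and ẽ_j for every j. -/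
/-- For `k`-periodic families of planar edge vectors `e j` (indices cyclically mod `k`)
with nonvanishing consecutive cross products, and heights `z j`, the vanishing of all the
3×3 determinants with rows `(e (j-1), z (j-1)), (e j, z j), (e (j+1), z (j+1))` is
equivalent to coplanarity of all the tangent vectors `(e j, z j)`. -/
theorem stmt4 (k : ℕ) (hk : 3 ≤ k)
    (e : ℕ → ℝ × ℝ) (z : ℕ → ℝ)
    (hpe : ∀ j, e (j + k) = e j) (hpz : ∀ j, z (j + k) = z j)
    (hcr : ∀ j, cross2 (e j) (e (j + 1)) ≠ 0) :
    (∀ j, cross2 (e (j + 1)) (e (j + 2)) * z j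
        - cross2 (e j) (e (j + 2)) * z (j + 1)
        + cross2 (e j) (e (j + 1)) * z (j + 2) = 0)
    ↔ (∃ w : ℝ × ℝ, ∀ j, z j = w.1 * (e j).1 + w.2 * (e j).2) := by
  constructor
  · intro h
    have c0 := hcr 0
    set c : ℝ := cross2 (e 0) (e 1) with hc
    refine ⟨((z 0 * (e 1).2 - z 1 * (e 0).2) / c,
             (z 1 * (e 0).1 - z 0 * (e 1).1) / c), ?_⟩
    set w : ℝ × ℝ := ((z 0 * (e 1).2 - z 1 * (e 0).2) / c,
             (z 1 * (e 0).1 - z 0 * (e 1).1) / c) with hw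
    have key : ∀ j, z j = w.1 * (e j).1 + w.2 * (e j).2 ∧
        z (j + 1) = w.1 * (e (j + 1)).1 + w.2 * (e (j + 1)).2 := by
      intro j
      induction j with
      | zero =>
        constructor
        · simp only [hw]
          field_simp
          simp only [hc, cross2]; ring
        · simp only [hw]
          field_simp
          simp only [hc, cross2]; ring
      | succ n ih =>
        refine ⟨ih.2, ?_⟩
        have hd := h n
        have hn := hcr n
        rw [ih.1, ih.2] at hd
        have : cross2 (e n) (e (n + 1)) * z (n + 2)
            = cross2 (e n) (e (n + 1)) * (w.1 * (e (n + 2)).1 + w.2 * (e (n + 2)).2) := by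
          have : cross2 (e (n + 1)) (e (n + 2)) * (w.1 * (e n).1 + w.2 * (e n).2)
              - cross2 (e n) (e (n + 2)) * (w.1 * (e (n + 1)).1 + w.2 * (e (n + 1)).2)
              + cross2 (e n) (e (n + 1)) * (w.1 * (e (n + 2)).1 + w.2 * (e (n + 2)).2) = 0 := by
            simp only [cross2]; ring
          linarith
        have := mul_left_cancel₀ hn this
        simpa [add_assoc] using this
    intro j
    exact (key j).1
  · rintro ⟨w, hwz⟩ j
    simp only [hwz, cross2]; ring
end

section
/- In the setting of two adjacent bilinearly parametrised quadrilateral elements with vertices λ̃, λ̃', γ̃, γ̃', ρ̃, ρ̃', let n ≥ 2 be an integer. Put ẽ^{(R)} = ρ̃−γ̃, ẽ^{(C)} = γ̃'−γ̃, ẽ^{(L)} = λ̃−γ̃, and the twist characteristics t̃^{(R)} = γ̃−ρ̃+ρ̃'−γ̃' and t̃^{(L)} = γ̃−γ̃'+λ̃'−λ̃; assume ⟨ẽ^{(R)}, ẽ^{(C)}⟩ ≠ 0 and ⟨ẽ^{(C)}, ẽ^{(L)}⟩ ≠ 0. Given reals ΔL₀, ΔL₁, ΔR₀, ΔR₁,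 ΔC₀, ΔC₁, define the ℝ³ vectors ε^{(R)} = (ẽ^{(R)}, n·ΔR₀), ε^{(C)} = (ẽ^{(C)}, n·ΔC₀), ε^{(L)} = (ẽ^{(L)}, −n·ΔL₀), τ^{(R)} = (t̃^{(R)}, n²(ΔR₁−ΔR₀)), τ^{(L)} = (t̃^{(L)}, −n²(ΔL₁−ΔL₀)), and set δ^{(C)} = n(n−1)(ΔC₁−ΔC₀). Suppose Eq(0) holds: l₀ΔL₀ + r₀ΔR₀ + c₀ΔC₀ = 0. Then Eq(1), namely n(l₀ΔL₁ + r₀ΔR₁) + (l₁ΔL₀ + r₁ΔR₀) + (n−1)c₀ΔC₁ + 2c₁ΔC₀ = 0, holds if and only if tw^{(R)} + tw^{(L)} = coeff^{(C)}·δ^{(C)}, where tw^{(R)} = mix(τ^{(R)}, ε^{(R)}, ε^{(C)})/⟨ẽ^{(R)}, ẽ^{(C)}⟩², tw^{(L)} = mix(τ^{(L)}, ε^{(C)}, ε^{(L)})/⟨ẽ^{(C)}, ẽ^{(L)}⟩² and coeff^{(C)} = ⟨ẽ^{(R)}, ẽ^{(L)}⟩/(⟨ẽ^{(R)}, ẽ^{(C)}⟩·⟨ẽ^{(C)},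 ẽ^{(L)}⟩), and mix(ā,b̄,c̄) denotes the determinant of the 3×3 matrix with rows ā, b̄, c̄. -/
/-- mixed product: determinant of the 3×3 matrix with rows `a`, `b`, `c`
(vectors in ℝ³ represented as `ℝ × ℝ × ℝ`). -/
def mix3 (a b c : ℝ × ℝ × ℝ) : ℝ :=
  a.1 * (b.2.1 * c.2.2 - b.2.2 * c.2.1)
    - a.2.1 * (b.1 * c.2.2 - b.2.2 * c.1)
    + a.2.2 * (b.1 * c.2.1 - b.2.1 * c.1)

/-- auxiliary -/
lemma stmt5_aux (N dL0 dL1 dR0 dR1 dC0 dC1 : ℝ) (A B C P Q M T S : ℝ × ℝ)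
    (hM : M = -C) (hT : T = P - A) (hS : S = Q - B)
    (hN : N ≠ 0) (hRC : cross2 A C ≠ 0) (hCL : cross2 C B ≠ 0)
    (hEq0 : cross2 A C * dL0 + -cross2 C B * dR0 + cross2 A B * dC0 = 0) :
    (N * (cross2 A C * dL1 + -cross2 C B * dR1)
        + (cross2 M P * dL0 + -cross2 Q M * dR0)
        + (N - 1) * cross2 A B * dC1
        + 2 * (1 / 2 * (cross2 A Q - cross2 B P)) * dC0 = 0)
    ↔ (mix3 (T.1, T.2, N ^ 2 * (dR1 - dR0)) (A.1, A.2, N * dR0) (C.1, C.2, N * dC0)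
          / (cross2 A C) ^ 2
        + mix3 (S.1, S.2, -(N ^ 2 * (dL1 - dL0))) (C.1, C.2, N * dC0) (B.1, B.2, -(N * dL0))
          / (cross2 C B) ^ 2
        = cross2 A B / (cross2 A C * cross2 C B) * (N * (N - 1) * (dC1 - dC0))) := by
  subst hM hT hS
  obtain ⟨a1, a2⟩ := A
  obtain ⟨b1, b2⟩ := B
  obtain ⟨c1, c2⟩ := C
  obtain ⟨p1, p2⟩ := P
  obtain ⟨q1, q2⟩ := Q
  simp only [cross2, mix3, Prod.mk_sub_mk, Prod.neg_mk, Prod.fst, Prod.snd] at *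
  constructor
  · intro hA
    field_simp
    linear_combination (-((a1 * c2 - a2 * c1) * (c1 * b2 - c2 * b1))) * hA
      + ((a1 * c2 - a2 * c1) * (c1 * q2 - c2 * q1) - (c1 * b2 - c2 * b1) * (c1 * p2 - c2 * p1) + (N - 1) * (a1 * c2 - a2 * c1) * (c1 * b2 - c2 * b1)) * hEq0
  · intro hB
    field_simp at hB
    have h1 : N * (a1 * c2 - a2 * c1) ^ 2 * (c1 * b2 - c2 * b1) ^ 2 ≠ 0 :=
      mul_ne_zero (mul_ne_zero hN (pow_ne_zero 2 hRC)) (pow_ne_zero 2 hCL)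
    have key : (N * (a1 * c2 - a2 * c1) ^ 2 * (c1 * b2 - c2 * b1) ^ 2) *
        (N * ((a1 * c2 - a2 * c1) * dL1 + -(c1 * b2 - c2 * b1) * dR1)
          + ((-c1 * p2 - -c2 * p1) * dL0 + -(q1 * -c2 - q2 * -c1) * dR0)
          + (N - 1) * (a1 * b2 - a2 * b1) * dC1
          + 2 * (1 / 2 * (a1 * q2 - a2 * q1 - (b1 * p2 - b2 * p1))) * dC0) = 0 := by
      linear_combination (-(N * (a1 * c2 - a2 * c1) * (c1 * b2 - c2 * b1))) * hB + (N * (a1 * c2 - a2 * c1) * (c1 * b2 - c2 * b1) * ((a1 * c2 - a2 * c1) * (c1 * q2 - c2 * q1) - (c1 * b2 - c2 * b1) * (c1 * p2 - c2 * p1) + (N - 1) * (a1 * c2 - a2 * c1) * (c1 * b2 - c2 * b1))) * hEq0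
    rcases mul_eq_zero.mp key with h | h
    · exact absurd h h1
    · linear_combination h

/-- Assuming "Eq(0)", the equation "Eq(1)" for an inner edge is equivalent to its
geometric form `tw^(R) + tw^(L) = coeff^(C) · δ^(C)`. -/
theorem stmt5 (n : ℕ) (hn : 2 ≤ n)
    (lam lam' gam gam' rho rho' : ℝ × ℝ)
    (dL0 dL1 dR0 dR1 dC0 dC1 : ℝ)
    (eR eC eL tR tL : ℝ × ℝ)
    (heR : eR = rho - gam) (heC : eC = gam' - gam) (heL : eL = lam - gam)
    (htR : tR = gam - rho + rho' - gam') (htL : tL = gam - gam' + lam' - lam)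
    (hRC : cross2 eR eC ≠ 0) (hCL : cross2 eC eL ≠ 0)
    (l0 l1 r0 r1 c0 c1 : ℝ)
    (hl0 : l0 = cross2 (rho - gam) (gam' - gam))
    (hl1 : l1 = cross2 (gam - gam') (rho' - gam'))
    (hr0 : r0 = -cross2 (gam' - gam) (lam - gam))
    (hr1 : r1 = -cross2 (lam' - gam') (gam - gam'))
    (hc0 : c0 = cross2 (rho - gam) (lam - gam))
    (hc1 : c1 = (1/2) * (cross2 (rho - gam) (lam' - gam') - cross2 (lam - gam) (rho' - gam')))
    (εR εC εL τR τL : ℝ × ℝ × ℝ) (δC : ℝ)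
    (hεR : εR = (eR.1, eR.2, (n : ℝ) * dR0))
    (hεC : εC = (eC.1, eC.2, (n : ℝ) * dC0))
    (hεL : εL = (eL.1, eL.2, -((n : ℝ) * dL0)))
    (hτR : τR = (tR.1, tR.2, (n : ℝ) ^ 2 * (dR1 - dR0)))
    (hτL : τL = (tL.1, tL.2, -((n : ℝ) ^ 2 * (dL1 - dL0))))
    (hδC : δC = (n : ℝ) * ((n : ℝ) - 1) * (dC1 - dC0))
    (hEq0 : l0 * dL0 + r0 * dR0 + c0 * dC0 = 0) :
    ((n : ℝ) * (l0 * dL1 + r0 * dR1) + (l1 * dL0 + r1 * dR0)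
        + ((n : ℝ) - 1) * c0 * dC1 + 2 * c1 * dC0 = 0)
    ↔ (mix3 τR εR εC / (cross2 eR eC) ^ 2 + mix3 τL εC εL / (cross2 eC eL) ^ 2
        = (cross2 eR eL / (cross2 eR eC * cross2 eC eL)) * δC) := by
  subst heR heC heL htR htL hl0 hl1 hr0 hr1 hc0 hc1 hεR hεC hεL hτR hτL hδC
  have hN : (n : ℝ) ≠ 0 := by positivity
  exact stmt5_aux (n : ℝ) dL0 dL1 dR0 dR1 dC0 dC1
    (rho - gam) (lam - gam) (gam' - gam) (rho' - gam') (lam' - gam')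
    (gam - gam') (gam - rho + rho' - gam') (gam - gam' + lam' - lam)
    (by abel) (by abel) (by abel) hN hRC hCL hEq0
end

section
/- Let k ≥ 4 be an even integer. Let θ₀ < θ₁ < … < θ_{k−1} be real numbers with θ_{k−1} < θ₀ + 2π, θ_{j+1} − θ_j < π for j = 0,…,k−2, and (θ₀ + 2π) − θ_{k−1} < π, and let ẽ_j = s_j·(cos θ_j, sin θ_j) with s_j > 0 for each j (so the ẽ_j model the directed edges emanating counterclockwise from an inner vertex of a strictly convex quadrilateral mesh, consecutive edges spanning an angle strictly between 0 and π). If ⟨ẽ_{j−1}, ẽ_{j+1}⟩ = 0 for every j (indices modulo k), then k = 4; moreover ẽ₀ and ẽ₂ are colinear and ẽ₁ and ẽ₃ are colinear, i.e. the vertex is a regular 4-vertex. -/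
/-- At an inner even vertex of a strictly convex quadrilateral mesh (edges given by
directions `θ j` listed counterclockwise, with consecutive angular gaps strictly between
`0` and `π`), if every pair of edges `e (j−1)`, `e (j+1)` is colinear then the valence is
`4` and the vertex is a regular 4-vertex. -/
theorem stmt7 (k : ℕ) (hk4 : 4 ≤ k) (hke : Even k)
    (θ s : ℕ → ℝ)
    (hmono : ∀ j, j + 1 < k → θ j < θ (j + 1))
    (hwrap : θ (k - 1) < θ 0 + 2 * Real.pi)
    (hgap : ∀ j, j + 1 < k → θ (j + 1) - θ j < Real.pi)
    (hgapw : (θ 0 + 2 * Real.pi) - θ (k - 1) < Real.pi)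
    (hs : ∀ j, j < k → 0 < s j)
    (e : ℕ → ℝ × ℝ)
    (he : ∀ j, j < k → e j = s j • (Real.cos (θ j), Real.sin (θ j)))
    (hcross : ∀ j, j < k → cross2 (e j) (e ((j + 2) % k)) = 0) :
    k = 4 ∧ cross2 (e 0) (e 2) = 0 ∧ cross2 (e 1) (e 3) = 0 := by
  have pi_pos := Real.pi_pos
  -- key step: for j with j+2 < k, θ (j+2) - θ j = π
  have key : ∀ j, j + 2 < k → θ (j + 2) - θ j = Real.pi := by
    intro j hj
    have hj1 : j + 1 < k := by omega
    have hjk : j < k := by omega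
    have hmod : (j + 2) % k = j + 2 := Nat.mod_eq_of_lt hj
    have hc := hcross j hjk
    rw [hmod, he j hjk, he (j+2) hj] at hc
    have hsin : Real.sin (θ (j + 2) - θ j) = 0 := by
      have hsj := hs j hjk
      have hsj2 := hs (j+2) hj
      have : s j * s (j+2) * Real.sin (θ (j + 2) - θ j) = 0 := by
        rw [Real.sin_sub]
        simp only [cross2, Prod.smul_mk, smul_eq_mul] at hc ⊢
        nlinarith [hc]
      have hne : s j * s (j+2) ≠ 0 := by positivity
      exact (mul_eq_zero.mp this).resolve_left hne
    have h1 : θ j < θ (j + 1) := hmono j hj1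
    have h2 : θ (j + 1) < θ (j + 2) := hmono (j+1) hj
    have g1 : θ (j + 1) - θ j < Real.pi := hgap j hj1
    have g2 : θ (j + 2) - θ (j + 1) < Real.pi := hgap (j+1) hj
    -- 0 < Δ < 2π, sin Δ = 0 ⇒ Δ = π
    set Δ := θ (j + 2) - θ j with hΔ
    have hpos : 0 < Δ := by simp [hΔ]; linarith
    have hlt : Δ < 2 * Real.pi := by simp [hΔ]; linarith
    have hs2 : Real.sin (Δ - Real.pi) = 0 := by
      rw [Real.sin_sub, Real.sin_pi, Real.cos_pi]; simp [hsin]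
    have hiff := Real.sin_eq_zero_iff_of_lt_of_lt
      (x := Δ - Real.pi) (by linarith) (by linarith)
    have := hiff.mp hs2
    linarith
  -- rule out k ≥ 6
  have hk : k = 4 := by
    by_contra hne
    have hk6 : 6 ≤ k := by
      rcases hke with ⟨m, hm⟩; omega
    have h02 : θ 2 - θ 0 = Real.pi := key 0 (by omega)
    have h24 : θ 4 - θ 2 = Real.pi := key 2 (by omega)
    -- θ 4 ≤ θ (k-1)
    have hmono' : ∀ i j : ℕ, i ≤ j → j < k → θ i ≤ θ j := by
      intro i j hij hjk
      induction j with
      | zero => simp_all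
      | succ n ih =>
        rcases Nat.eq_or_lt_of_le hij with h | h
        · rw [h]
        · have : θ i ≤ θ n := ih (by omega) (by omega)
          have := hmono n hjk
          linarith
    have h4k : θ 4 ≤ θ (k - 1) := hmono' 4 (k-1) (by omega) (by omega)
    linarith
  subst hk
  refine ⟨rfl, ?_, ?_⟩
  · have := hcross 0 (by norm_num); simpa using this
  · have := hcross 1 (by norm_num); simpa using this
end

section
/- Let k ≥ 4 be an even integer and let ẽ_j ∈ ℝ² (indices j taken cyclically modulo k) satisfy ⟨ẽ_{j−1}, ẽ_j⟩ ≠ 0 for every j. Set coeff_j = ⟨ẽ_{j−1}, ẽ_{j+1}⟩/(⟨ẽ_{j−1}, ẽ_j⟩·⟨ẽ_j, ẽ_{j+1}⟩). Let Z_XX, Z_XY, Z_YY ∈ ℝ and, writing ẽ_j = (α_j, β_j), put δ_j = α_j²·Z_XX + 2α_jβ_j·Z_XY + β_j²·Z_YY. Then the "Circular Constraint" is automatically satisfied: ∑_{j=0}^{k−1} (−1)^j · coeff_j · δ_j = 0. In other words, if the second-order directional data δ_j are compatible with a second fundamental form at the vertex, the Circular Constraint holds. -/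
/-- If the second-order directional data `δ j` are compatible with a second fundamental
form `(ZXX, ZXY, ZYY)` at an inner even vertex, then the "Circular Constraint" is
automatically satisfied. Indices are cyclic modulo `k` (the edge family `e` is
`k`-periodic, and `e (j + (k-1))` stands for `e (j−1)`). -/
theorem stmt8 (k : ℕ) (hk : 4 ≤ k) (hke : Even k)
    (e : ℕ → ℝ × ℝ) (hper : ∀ j, e (j + k) = e j)
    (hcross : ∀ j, cross2 (e j) (e (j + 1)) ≠ 0)
    (ZXX ZXY ZYY : ℝ) :
    ∑ j ∈ Finset.range k, (-1 : ℝ) ^ j *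
      (cross2 (e (j + (k - 1))) (e (j + 1)) /
        (cross2 (e (j + (k - 1))) (e j) * cross2 (e j) (e (j + 1)))) *
      ((e j).1 ^ 2 * ZXX + 2 * (e j).1 * (e j).2 * ZXY + (e j).2 ^ 2 * ZYY) = 0 := by
  set B : (ℝ × ℝ) → (ℝ × ℝ) → ℝ := fun a b =>
    a.1 * b.1 * ZXX + (a.1 * b.2 + a.2 * b.1) * ZXY + a.2 * b.2 * ZYY with hB
  set F : ℕ → ℝ := fun j => (-1 : ℝ) ^ j * (B (e j) (e (j + 1)) / cross2 (e j) (e (j + 1)))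
    with hF
  have hodd : Odd (k - 1) := by
    obtain ⟨m, hm⟩ := hke; exact ⟨m - 1, by omega⟩
  have hsign : ∀ j : ℕ, (-1 : ℝ) ^ (j + (k - 1)) = -(-1 : ℝ) ^ j := by
    intro j
    rw [pow_add, hodd.neg_one_pow, mul_neg_one]
  have key : ∀ j : ℕ, (-1 : ℝ) ^ j *
      (cross2 (e (j + (k - 1))) (e (j + 1)) /
        (cross2 (e (j + (k - 1))) (e j) * cross2 (e j) (e (j + 1)))) *
      ((e j).1 ^ 2 * ZXX + 2 * (e j).1 * (e j).2 * ZXY + (e j).2 ^ 2 * ZYY)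
      = F j - F (j + (k - 1)) := by
    intro j
    have he : e (j + (k - 1) + 1) = e j := by
      rw [show j + (k - 1) + 1 = j + k by omega, hper]
    have hab : cross2 (e (j + (k - 1))) (e j) ≠ 0 := by
      have h := hcross (j + (k - 1)); rwa [he] at h
    have hbc := hcross j
    simp only [hF, hB, he, hsign]
    field_simp
    simp only [cross2]
    ring
  rw [Finset.sum_congr rfl (fun j _ => key j), Finset.sum_sub_distrib]
  have hFper : ∀ j, F (j + k) = F j := by
    intro j
    simp only [hF]
    rw [show j + k + 1 = (j + 1) + k by ring, hper, hper, pow_add, hke.neg_one_pow, mul_one]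
  have hshift : ∑ j ∈ Finset.range k, F (j + (k - 1)) = ∑ j ∈ Finset.range k, F j := by
    obtain ⟨n, hn⟩ : ∃ n, k = n + 1 := ⟨k - 1, by omega⟩
    simp only [hn, Nat.add_sub_cancel]
    rw [Finset.sum_range_succ' (fun j => F (j + n)), Finset.sum_range_succ]
    congr 1
    · refine Finset.sum_congr rfl fun j _ => ?_
      rw [show j + 1 + n = j + (n + 1) by ring, ← hn, hFper]
    · simp
  rw [hshift, sub_self]
end

section
/- Let ẽ₁, ẽ₂, ẽ₃, ẽ₄ ∈ ℝ² satisfy ⟨ẽ₁, ẽ₂⟩ ≠ 0, ⟨ẽ₂, ẽ₃⟩ ≠ 0, ⟨ẽ₃, ẽ₄⟩ ≠ 0, ⟨ẽ₄, ẽ₁⟩ ≠ 0, and additionally ⟨ẽ₃, ẽ₁⟩ ≠ 0 (so the configuration is a non-regular 4-vertex). With coeff_j = ⟨ẽ_{j−1}, ẽ_{j+1}⟩/(⟨ẽ_{j−1}, ẽ_j⟩·⟨ẽ_j, ẽ_{j+1}⟩) (indices taken cyclically modulo 4), suppose δ₁, δ₂, δ₃, δ₄ ∈ ℝ satisfy the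 Circular Constraint ∑_{j=1}^{4} (−1)^j · coeff_j · δ_j = 0. Then there exist Z_XX, Z_XY, Z_YY ∈ ℝ such that, writing ẽ_j = (α_j, β_j), δ_j = α_j²·Z_XX + 2α_jβ_j·Z_XY + β_j²·Z_YY holds for every j = 1,…,4; i.e. for a non-regular 4-vertex, compatibility of the δ_j with second-order partial derivatives of some functional surface is necessary as well as sufficient for the Circular Constraint. -/
/-- The circular constraint holds identically for values of a quadratic form. -/
lemma cc_quadratic (e1 e2 e3 e4 : ℝ × ℝ)
    (h12 : cross2 e1 e2 ≠ 0) (h23 : cross2 e2 e3 ≠ 0)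
    (h34 : cross2 e3 e4 ≠ 0) (h41 : cross2 e4 e1 ≠ 0)
    (ZXX ZXY ZYY : ℝ) :
        -(cross2 e4 e2 / (cross2 e4 e1 * cross2 e1 e2)) *
          (e1.1 ^ 2 * ZXX + 2 * e1.1 * e1.2 * ZXY + e1.2 ^ 2 * ZYY)
      + (cross2 e1 e3 / (cross2 e1 e2 * cross2 e2 e3)) *
          (e2.1 ^ 2 * ZXX + 2 * e2.1 * e2.2 * ZXY + e2.2 ^ 2 * ZYY)
      - (cross2 e2 e4 / (cross2 e2 e3 * cross2 e3 e4)) *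
          (e3.1 ^ 2 * ZXX + 2 * e3.1 * e3.2 * ZXY + e3.2 ^ 2 * ZYY)
      + (cross2 e3 e1 / (cross2 e3 e4 * cross2 e4 e1)) *
          (e4.1 ^ 2 * ZXX + 2 * e4.1 * e4.2 * ZXY + e4.2 ^ 2 * ZYY) = 0 := by
  have hP : -(cross2 e4 e2) * cross2 e2 e3 * cross2 e3 e4 * (e1.1 ^ 2 * ZXX + 2 * e1.1 * e1.2 * ZXY + e1.2 ^ 2 * ZYY) + cross2 e1 e3 * cross2 e3 e4 * cross2 e4 e1 * (e2.1 ^ 2 * ZXX + 2 * e2.1 * e2.2 * ZXY + e2.2 ^ 2 * ZYY) - cross2 e2 e4 * cross2 e4 e1 * cross2 e1 e2 * (e3.1 ^ 2 * ZXX + 2 * e3.1 * e3.2 * ZXY + e3.2 ^ 2 * ZYY) + cross2 e3 e1 * cross2 e1 e2 * cross2 e2 e3 * (e4.1 ^ 2 * ZXX + 2 * e4.1 * e4.2 * ZXY + e4.2 ^ 2 * ZYY) = 0 := by simp only [cross2]; ring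
  generalize cross2 e4 e2 = x42 at hP ⊢
  generalize cross2 e1 e3 = x13 at hP ⊢
  generalize cross2 e2 e4 = x24 at hP ⊢
  generalize cross2 e3 e1 = x31 at hP ⊢
  generalize cross2 e1 e2 = x12 at h12 hP ⊢
  generalize cross2 e2 e3 = x23 at h23 hP ⊢
  generalize cross2 e3 e4 = x34 at h34 hP ⊢
  generalize cross2 e4 e1 = x41 at h41 hP ⊢
  field_simp
  linear_combination hP

/-- For a non-regular 4-vertex, the "Circular Constraint" on the data `δ j` implies the
existence of second-order partial derivatives `ZXX, ZXY, ZYY` of a functional surface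
compatible with all the `δ j`. -/
theorem stmt9 (e1 e2 e3 e4 : ℝ × ℝ)
    (h12 : cross2 e1 e2 ≠ 0) (h23 : cross2 e2 e3 ≠ 0)
    (h34 : cross2 e3 e4 ≠ 0) (h41 : cross2 e4 e1 ≠ 0)
    (h31 : cross2 e3 e1 ≠ 0)
    (δ1 δ2 δ3 δ4 : ℝ)
    (hcc :
        -(cross2 e4 e2 / (cross2 e4 e1 * cross2 e1 e2)) * δ1
      + (cross2 e1 e3 / (cross2 e1 e2 * cross2 e2 e3)) * δ2
      - (cross2 e2 e4 / (cross2 e2 e3 * cross2 e3 e4)) * δ3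
      + (cross2 e3 e1 / (cross2 e3 e4 * cross2 e4 e1)) * δ4 = 0) :
    ∃ ZXX ZXY ZYY : ℝ,
      δ1 = e1.1 ^ 2 * ZXX + 2 * e1.1 * e1.2 * ZXY + e1.2 ^ 2 * ZYY ∧
      δ2 = e2.1 ^ 2 * ZXX + 2 * e2.1 * e2.2 * ZXY + e2.2 ^ 2 * ZYY ∧
      δ3 = e3.1 ^ 2 * ZXX + 2 * e3.1 * e3.2 * ZXY + e3.2 ^ 2 * ZYY ∧
      δ4 = e4.1 ^ 2 * ZXX + 2 * e4.1 * e4.2 * ZXY + e4.2 ^ 2 * ZYY := by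
  obtain ⟨a1, b1⟩ := e1
  obtain ⟨a2, b2⟩ := e2
  obtain ⟨a3, b3⟩ := e3
  obtain ⟨a4, b4⟩ := e4
  simp only [cross2] at *
  set D : ℝ := -(2 * (a1*b2 - b1*a2) * (a2*b3 - b2*a3) * (a3*b1 - b3*a1)) with hD
  have hDne : D ≠ 0 := by
    simp only [hD, neg_ne_zero]
    exact mul_ne_zero (mul_ne_zero (mul_ne_zero two_ne_zero h12) h23) h31
  set N1 : ℝ := δ1 * (2*a2*b2*b3^2 - 2*a3*b3*b2^2) - 2*a1*b1*(δ2*b3^2 - δ3*b2^2)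
      + b1^2 * (δ2*2*a3*b3 - δ3*2*a2*b2) with hN1
  set N2 : ℝ := a1^2*(δ2*b3^2 - δ3*b2^2) - δ1*(a2^2*b3^2 - a3^2*b2^2)
      + b1^2*(a2^2*δ3 - a3^2*δ2) with hN2
  set N3 : ℝ := a1^2*(2*a2*b2*δ3 - 2*a3*b3*δ2) - 2*a1*b1*(a2^2*δ3 - a3^2*δ2)
      + δ1*(a2^2*2*a3*b3 - a3^2*2*a2*b2) with hN3
  have h1 : δ1 = a1 ^ 2 * (N1/D) + 2 * a1 * b1 * (N2/D) + b1 ^ 2 * (N3/D) := by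
    field_simp
    simp only [hD, hN1, hN2, hN3]
    ring
  have h2 : δ2 = a2 ^ 2 * (N1/D) + 2 * a2 * b2 * (N2/D) + b2 ^ 2 * (N3/D) := by
    field_simp
    simp only [hD, hN1, hN2, hN3]
    ring
  have h3 : δ3 = a3 ^ 2 * (N1/D) + 2 * a3 * b3 * (N2/D) + b3 ^ 2 * (N3/D) := by
    field_simp
    simp only [hD, hN1, hN2, hN3]
    ring
  refine ⟨N1/D, N2/D, N3/D, h1, h2, h3, ?_⟩
  have hq := cc_quadratic (a1, b1) (a2, b2) (a3, b3) (a4, b4) h12 h23 h34 h41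
    (N1/D) (N2/D) (N3/D)
  simp only [cross2] at hq
  rw [h1, h2, h3] at hcc
  have hcoef : (a3*b1 - b3*a1) / ((a3*b4 - b3*a4) * (a4*b1 - b4*a1)) ≠ 0 :=
    div_ne_zero h31 (mul_ne_zero h34 h41)
  refine mul_left_cancel₀ hcoef ?_
  linarith [hcc, hq]
end

section
/- Let n ≥ 4 be an integer and let l₀, l₁, r₀, r₁ be nonzero reals. Let Â be the real matrix with rows indexed by s ∈ {2,…,n−1} and columns indexed by pairs (t,σ) with t ∈ {2,…,n−2} and σ ∈ {L,R}, whose entries are: Â[s,(t,L)] = (n+1−t)·l₀ if s = t, Â[s,(t,L)] = (t+1)·l₁ if s = t+1, and 0 otherwise; Â[s,(t,R)] = (n+1−t)·r₀ if s = t, Â[s,(t,R)] = (t+1)·r₁ if s = t+1, and 0 otherwise. Then: (a) there exist coefficients α₂,…,α_{n−1}, not all zero, with ∑_{s=2}^{n−1} α_s·Â_s = 0 (where Â_s denotes the s-th row) if and only if l₀r₁ − r₀l₁ = 0 (the "Projections Relation"); (b) when l₀r₁ = r₀l₁, every such family of coefficients satisfies α_s = (2/(n(n+1)))·C(n+1,s)·(−1)^s·κ^{s−2}·α₂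 for s = 2,…,n−1, where κ = l₀/l₁ = r₀/r₁. -/
open Finset

/-- entry of the "Middle" system matrix in the column `(t, L)`. -/
noncomputable def entL (n : ℕ) (l0 l1 : ℝ) (s t : ℕ) : ℝ :=
  if s = t then ((n : ℝ) + 1 - (t : ℝ)) * l0
  else if s = t + 1 then ((t : ℝ) + 1) * l1
  else 0

/-- entry of the "Middle" system matrix in the column `(t, R)`. -/
noncomputable def entR (n : ℕ) (r0 r1 : ℝ) (s t : ℕ) : ℝ :=
  if s = t then ((n : ℝ) + 1 - (t : ℝ)) * r0
  else if s = t + 1 then ((t : ℝ) + 1) * r1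
  else 0

lemma entR_eq_entL : @entR = @entL := rfl

lemma sum_ent (n : ℕ) (c0 c1 : ℝ) (α : ℕ → ℝ) (t : ℕ) (hn : 4 ≤ n)
    (ht2 : 2 ≤ t) (ht : t ≤ n - 2) :
    ∑ s ∈ Icc 2 (n - 1), α s * entL n c0 c1 s t
      = α t * (((n:ℝ) + 1 - (t:ℝ)) * c0) + α (t+1) * (((t:ℝ) + 1) * c1) := by
  have h1 : t ∈ Icc 2 (n-1) := by rw [mem_Icc]; omega
  have h2 : (t+1) ∈ Icc 2 (n-1) := by rw [mem_Icc]; omega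
  have hrw : ∀ s ∈ Icc 2 (n-1), α s * entL n c0 c1 s t
      = (if s = t then α t * (((n:ℝ)+1-(t:ℝ)) * c0) else 0)
        + (if s = t+1 then α (t+1) * (((t:ℝ)+1) * c1) else 0) := by
    intro s _
    unfold entL
    by_cases hs : s = t
    · subst hs
      rw [if_pos rfl, if_pos rfl, if_neg (by omega)]
      ring
    · rw [if_neg hs, if_neg hs]
      by_cases hs' : s = t+1
      · subst hs'
        rw [if_pos rfl, if_pos rfl]
        push_cast
        ring
      · rw [if_neg hs', if_neg hs']
        ring
  rw [Finset.sum_congr rfl hrw, Finset.sum_add_distrib,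
    Finset.sum_ite_eq' _ t, Finset.sum_ite_eq' _ (t+1), if_pos h1, if_pos h2]

lemma key (n t : ℕ) (hn : 4 ≤ n) (ht2 : 2 ≤ t) (htn : t ≤ n - 2) (κ a b : ℝ)
    (hab : a = κ * b) :
    (((n+1).choose t : ℝ) * (-1)^t * κ^(t-2)) * (((n:ℝ)+1-(t:ℝ)) * a)
    + (((n+1).choose (t+1) : ℝ) * (-1)^(t+1) * κ^(t+1-2)) * (((t:ℝ)+1) * b) = 0 := by
  have hch : ((n+1).choose (t+1) : ℝ) * ((t:ℝ)+1) = ((n+1).choose t : ℝ) * (((n:ℝ)+1) - (t:ℝ)) := by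
    have h := Nat.choose_succ_right_eq (n+1) t
    have h2 : (((n+1).choose (t+1) * (t+1) : ℕ) : ℝ) = (((n+1).choose t * (n+1-t) : ℕ) : ℝ) := by
      exact_mod_cast congrArg (Nat.cast (R := ℝ)) h
    push_cast [Nat.cast_sub (show t ≤ n+1 by omega)] at h2
    linarith
  have hpow : κ^(t+1-2) = κ^(t-2) * κ := by
    have h3 : t+1-2 = (t-2)+1 := by omega
    rw [h3, pow_succ]
  have hsign : (-1:ℝ)^(t+1) = -(-1)^t := by rw [pow_succ]; ring
  rw [hab, hpow, hsign]
  linear_combination (-(-1:ℝ)^t * κ^(t-2) * κ * b) * hch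

/-- (a) A nontrivial vanishing linear combination of the rows of the "Middle" system
matrix exists iff the "Projections Relation" `l₀r₁ − r₀l₁ = 0` holds; (b) when it holds,
`κ := l₀/l₁ = r₀/r₁` and the coefficients of any such combination are given by the
explicit formula `α_s = (2/(n(n+1)))·C(n+1,s)·(−1)^s·κ^(s−2)·α₂`. -/
theorem stmt10 (n : ℕ) (hn : 4 ≤ n)
    (l0 l1 r0 r1 : ℝ)
    (hl0 : l0 ≠ 0) (hl1 : l1 ≠ 0) (hr0 : r0 ≠ 0) (hr1 : r1 ≠ 0) :
    ((∃ α : ℕ → ℝ,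
        (∃ s, 2 ≤ s ∧ s ≤ n - 1 ∧ α s ≠ 0) ∧
        (∀ t, 2 ≤ t → t ≤ n - 2 →
          (∑ s ∈ Icc 2 (n - 1), α s * entL n l0 l1 s t) = 0 ∧
          (∑ s ∈ Icc 2 (n - 1), α s * entR n r0 r1 s t) = 0))
      ↔ l0 * r1 - r0 * l1 = 0) ∧
    (l0 * r1 = r0 * l1 →
      l0 / l1 = r0 / r1 ∧
      ∀ α : ℕ → ℝ,
        (∃ s, 2 ≤ s ∧ s ≤ n - 1 ∧ α s ≠ 0) →
        (∀ t, 2 ≤ t → t ≤ n - 2 →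
          (∑ s ∈ Icc 2 (n - 1), α s * entL n l0 l1 s t) = 0 ∧
          (∑ s ∈ Icc 2 (n - 1), α s * entR n r0 r1 s t) = 0) →
        ∀ s, 2 ≤ s → s ≤ n - 1 →
          α s = (2 / ((n : ℝ) * ((n : ℝ) + 1))) * ((n + 1).choose s : ℝ) *
            (-1 : ℝ) ^ s * (l0 / l1) ^ (s - 2) * α 2) := by
  have hn0 : (0:ℝ) < (n:ℝ) := by exact_mod_cast (by omega : 0 < n)
  constructor
  · constructor
    · rintro ⟨α, ⟨s0, hs02, hs0n, hs0ne⟩, heq⟩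
      by_contra hD
      have hz : ∀ t, 2 ≤ t → t ≤ n-2 → α t = 0 := by
        intro t h2 hl
        obtain ⟨hL, hR⟩ := heq t h2 hl
        rw [sum_ent n l0 l1 α t hn h2 hl] at hL
        rw [entR_eq_entL, sum_ent n r0 r1 α t hn h2 hl] at hR
        have hnt : ((n:ℝ)+1-(t:ℝ)) ≠ 0 := by
          have : (t:ℝ) ≤ (n:ℝ) := by exact_mod_cast (by omega : t ≤ n)
          linarith
        have hcomb : α t * (((n:ℝ)+1-(t:ℝ)) * (l0*r1 - r0*l1)) = 0 := by
          linear_combination r1 * hL - l1 * hR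
        rcases mul_eq_zero.1 hcomb with h | h
        · exact h
        · rcases mul_eq_zero.1 h with h' | h'
          · exact absurd h' hnt
          · exact absurd h' hD
      have hz' : α s0 = 0 := by
        by_cases hc : s0 ≤ n-2
        · exact hz s0 hs02 hc
        · have hs0 : s0 = n-1 := by omega
          obtain ⟨hL, _⟩ := heq (n-2) (by omega) le_rfl
          rw [sum_ent n l0 l1 α (n-2) hn (by omega) le_rfl] at hL
          have h1 : α (n-2) = 0 := hz (n-2) (by omega) le_rfl
          have h2' : (n-2)+1 = n-1 := by omega
          rw [h1, h2'] at hL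
          have hY : ((((n-2:ℕ)):ℝ)+1) * l1 ≠ 0 := by
            apply mul_ne_zero _ hl1
            positivity
          have hml : α (n-1) * (((((n-2:ℕ)):ℝ)+1) * l1) = 0 := by linarith
          rw [hs0]
          exact (mul_eq_zero.1 hml).resolve_right hY
      exact hs0ne hz'
    · intro h
      refine ⟨fun s => ((n+1).choose s : ℝ) * (-1)^s * (l0/l1)^(s-2), ⟨2, le_rfl, by omega, ?_⟩, ?_⟩
      · simp only [Nat.sub_self, pow_zero, mul_one, neg_one_sq]
        exact_mod_cast Nat.choose_pos (show 2 ≤ n+1 by omega) |>.ne'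
      · intro t h2 hl
        have hab : l0 = (l0/l1) * l1 := by field_simp
        have hrb : r0 = (l0/l1) * r1 := by field_simp; linarith
        constructor
        · rw [sum_ent n l0 l1 _ t hn h2 hl]
          exact key n t hn h2 hl (l0/l1) l0 l1 hab
        · rw [entR_eq_entL, sum_ent n r0 r1 _ t hn h2 hl]
          exact key n t hn h2 hl (l0/l1) r0 r1 hrb
  · intro h
    have hκ : l0 / l1 = r0 / r1 := by rw [div_eq_div_iff hl1 hr1]; exact h
    refine ⟨hκ, ?_⟩
    intro α _ heq s hs2 hsn
    revert hsn
    induction s, hs2 using Nat.le_induction with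
    | base =>
      intro _
      have hch2 : (((n+1).choose 2 : ℕ) : ℝ) = ((n:ℝ)+1) * (n:ℝ) / 2 := by
        rw [Nat.cast_choose_two]
        push_cast
        ring
      rw [hch2]
      have hne : (n:ℝ) ≠ 0 := ne_of_gt hn0
      have hne1 : (n:ℝ)+1 ≠ 0 := by positivity
      field_simp
      ring
    | succ t ht IH =>
      intro hsn
      have htn : t ≤ n-2 := by omega
      have hIH := IH (by omega)
      obtain ⟨hL, _⟩ := heq t ht htn
      rw [sum_ent n l0 l1 α t hn ht htn] at hL
      have hab : l0 = (l0/l1) * l1 := by field_simp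
      have hkey := key n t hn ht htn (l0/l1) l0 l1 hab
      have hY : ((t:ℝ)+1) * l1 ≠ 0 := mul_ne_zero (by positivity) hl1
      have hd : (α (t+1) - (2/((n:ℝ)*((n:ℝ)+1)) * ((n+1).choose (t+1):ℝ) *
          (-1:ℝ)^(t+1) * (l0/l1)^(t+1-2) * α 2)) * (((t:ℝ)+1)*l1) = 0 := by
        linear_combination hL - (2/((n:ℝ)*((n:ℝ)+1)) * α 2) * hkey
          - (((n:ℝ)+1-(t:ℝ)) * l0) * hIH
      have := (mul_eq_zero.1 hd).resolve_right hY
      linarith [sub_eq_zero.1 this]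
end

section
/- Consider two adjacent bilinearly parametrised quadrilateral elements with vertices λ̃, λ̃', γ̃, γ̃', ρ̃, ρ̃' ∈ ℝ², where both the left quadrilateral (λ̃, γ̃, γ̃', λ̃') and the right quadrilateral (γ̃, ρ̃, ρ̃', γ̃') are strictly convex in counterclockwise order. Let n ≥ 4, let l₀, l₁, r₀, r₁, c₀, c₁, c₂ be the conventional weight coefficients of the common edge, and suppose real values ΔC₀,…,ΔC_{n−1} and ΔL_t, ΔR_t for t ∈ {0, 1, n−1, n} are given which satisfy the four indexed equations Eq(0), Eq(1), Eq(n) and Eq(n+1). Then there exist real values ΔL_t, ΔR_t for t = 2,…,n−2 such that Eq(s) holds for every s = 2,…,n−1; that is, the "Middle" system of G¹-continuity equations is always consistent in terms of the side middle control points. -/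
/-- the indexed G¹-continuity equation "Eq(s)" for an inner edge in the case of the
global bilinear in-plane parametrisation (out-of-range terms carry zero coefficients). -/
def EqS (n : ℕ) (l0 l1 r0 r1 c0 c1 c2 : ℝ) (dL dR dC : ℕ → ℝ) (s : ℕ) : Prop :=
  ((n : ℝ) + 1 - (s : ℝ)) * (l0 * dL s + r0 * dR s)
    + (s : ℝ) * (l1 * dL (s - 1) + r1 * dR (s - 1))
    + (((n : ℝ) - (s : ℝ)) * ((n : ℝ) + 1 - (s : ℝ)) / (n : ℝ)) * c0 * dC s
    + (2 * (s : ℝ) * ((n : ℝ) + 1 - (s : ℝ)) / (n : ℝ)) * c1 * dC (s - 1)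
    + ((s : ℝ) * ((s : ℝ) - 1) / (n : ℝ)) * c2 * dC (s - 2) = 0

private lemma solveX (l0 l1 r0 r1 X Y : ℝ) (hdet : l0*r1 - l1*r0 ≠ 0) :
    l0 * ((r1*X - r0*Y)/(l0*r1 - l1*r0)) + r0 * ((l0*Y - l1*X)/(l0*r1 - l1*r0)) = X := by
  rw [mul_div_assoc', mul_div_assoc', ← add_div, div_eq_iff hdet]; ring

private lemma solveY (l0 l1 r0 r1 X Y : ℝ) (hdet : l0*r1 - l1*r0 ≠ 0) :
    l1 * ((r1*X - r0*Y)/(l0*r1 - l1*r0)) + r1 * ((l0*Y - l1*X)/(l0*r1 - l1*r0)) = Y := by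
  rw [mul_div_assoc', mul_div_assoc', ← add_div, div_eq_iff hdet]; ring

private lemma degId (N s c0 c1 c2 l0 l1 A B C : ℝ) (hN : N ≠ 0) (h0 : l0 ≠ 0) (h1 : l1 ≠ 0)
    (key : l1^2*c0 - 2*l0*l1*c1 + l0^2*c2 = 0) :
    (N + 1 - s) * (l0 * ((-((N - s) * c0 * A) * l1 - s * c2 * B * l0) / (N * l0 * l1)))
      + s * (l1 * ((-((N - (s-1)) * c0 * B) * l1 - (s-1) * c2 * C * l0) / (N * l0 * l1)))
      + ((N - s)*(N + 1 - s)/N) * c0 * A + (2*s*(N + 1 - s)/N) * c1 * B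
      + (s*(s-1)/N) * c2 * C = 0 := by
  field_simp
  linear_combination (-(s*(N+1-s)*B)) * key

set_option maxHeartbeats 2000000 in
/-- Consistency of the "Middle" system: for two adjacent strictly convex bilinearly
parametrised elements, if Eq(0), Eq(1), Eq(n) and Eq(n+1) hold, then the middle side
control values `ΔL_t, ΔR_t` (t = 2,…,n−2) can be chosen so that Eq(s) holds for every
s = 2,…,n−1. -/
theorem stmt11 (n : ℕ) (hn : 4 ≤ n)
    (lam lam' gam gam' rho rho' : ℝ × ℝ)
    (hconvL1 : 0 < cross2 (gam - lam) (gam' - gam))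
    (hconvL2 : 0 < cross2 (gam' - gam) (lam' - gam'))
    (hconvL3 : 0 < cross2 (lam' - gam') (lam - lam'))
    (hconvL4 : 0 < cross2 (lam - lam') (gam - lam))
    (hconvR1 : 0 < cross2 (rho - gam) (rho' - rho))
    (hconvR2 : 0 < cross2 (rho' - rho) (gam' - rho'))
    (hconvR3 : 0 < cross2 (gam' - rho') (gam - gam'))
    (hconvR4 : 0 < cross2 (gam - gam') (rho - gam))
    (l0 l1 r0 r1 c0 c1 c2 : ℝ)
    (hl0 : l0 = cross2 (rho - gam) (gam' - gam))
    (hl1 : l1 = cross2 (gam - gam') (rho' - gam'))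
    (hr0 : r0 = -cross2 (gam' - gam) (lam - gam))
    (hr1 : r1 = -cross2 (lam' - gam') (gam - gam'))
    (hc0 : c0 = cross2 (rho - gam) (lam - gam))
    (hc1 : c1 = (1/2) * (cross2 (rho - gam) (lam' - gam') - cross2 (lam - gam) (rho' - gam')))
    (hc2 : c2 = -cross2 (lam' - gam') (rho' - gam'))
    (dL dR dC : ℕ → ℝ)
    (h0 : EqS n l0 l1 r0 r1 c0 c1 c2 dL dR dC 0)
    (h1 : EqS n l0 l1 r0 r1 c0 c1 c2 dL dR dC 1)
    (hN : EqS n l0 l1 r0 r1 c0 c1 c2 dL dR dC n)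
    (hN1 : EqS n l0 l1 r0 r1 c0 c1 c2 dL dR dC (n + 1)) :
    ∃ dL' dR' : ℕ → ℝ,
      dL' 0 = dL 0 ∧ dL' 1 = dL 1 ∧ dL' (n - 1) = dL (n - 1) ∧ dL' n = dL n ∧
      dR' 0 = dR 0 ∧ dR' 1 = dR 1 ∧ dR' (n - 1) = dR (n - 1) ∧ dR' n = dR n ∧
      ∀ s, 2 ≤ s → s ≤ n - 1 → EqS n l0 l1 r0 r1 c0 c1 c2 dL' dR' dC s := by
  obtain ⟨m, rfl⟩ : ∃ m, n = m + 4 := ⟨n - 4, by omega⟩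
  have hl0pos : 0 < l0 := by
    rw [hl0, show cross2 (rho - gam) (gam' - gam) = cross2 (gam - gam') (rho - gam) by
      simp only [cross2, Prod.fst_sub, Prod.snd_sub]; ring]
    exact hconvR4
  have hl1pos : 0 < l1 := by
    rw [hl1, show cross2 (gam - gam') (rho' - gam') = cross2 (gam' - rho') (gam - gam') by
      simp only [cross2, Prod.fst_sub, Prod.snd_sub]; ring]
    exact hconvR3
  have hl0ne : l0 ≠ 0 := ne_of_gt hl0pos
  have hl1ne : l1 ≠ 0 := ne_of_gt hl1pos
  have hm : ((m:ℝ) + 4) ≠ 0 := by positivity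
  have hm3 : ((m:ℝ) + 3) ≠ 0 := by positivity
  have hm5 : ((m:ℝ) + 4 + 1) ≠ 0 := by positivity
  unfold EqS at h0 h1 hN hN1
  push_cast at h0 h1 hN hN1
  norm_num at h0 h1 hN hN1
  by_cases hdet : l0 * r1 - l1 * r0 = 0
  · -- degenerate case
    have key : l1^2*c0 - 2*l0*l1*c1 + l0^2*c2 = 0 := by
      subst hl0 hl1 hr0 hr1 hc0 hc1 hc2
      simp only [cross2, Prod.fst_sub, Prod.snd_sub] at hdet ⊢
      linear_combination
        (-((rho.1-gam.1)*(rho'.2-gam'.2) - (rho.2-gam.2)*(rho'.1-gam'.1))) * hdet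
    have e0 : l0 * dL 0 + r0 * dR 0 + c0 * dC 0 = 0 := by
      field_simp at h0
      exact mul_left_cancel₀ hm5 (by linear_combination h0)
    have e1 : ((m:ℝ)+4) * (l0 * dL 1 + r0 * dR 1) + (l1 * dL 0 + r1 * dR 0)
        + ((m:ℝ)+3)*(c0*dC 1) + 2*(c1*dC 0) = 0 := by
      field_simp at h1
      linear_combination h1
    have e3 : (l0 * dL (m+4) + r0 * dR (m+4)) + ((m:ℝ)+4) * (l1 * dL (m+3) + r1 * dR (m+3))
        + 2*(c1*dC (m+3)) + ((m:ℝ)+3)*(c2*dC (m+2)) = 0 := by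
      field_simp at hN
      linear_combination hN
    have e4 : (l1 * dL (m+4) + r1 * dR (m+4)) + c2 * dC (m+3) = 0 := by
      field_simp at hN1
      exact mul_left_cancel₀ hm5 (by linear_combination hN1)
    have hy0 : l0 * (l1*dL 0 + r1*dR 0) = l1 * (l0*dL 0 + r0*dR 0) := by
      linear_combination dR 0 * hdet
    have hy1 : l0 * (l1*dL 1 + r1*dR 1) = l1 * (l0*dL 1 + r0*dR 1) := by
      linear_combination dR 1 * hdet
    have hym : l0 * (l1*dL (m+3) + r1*dR (m+3)) = l1 * (l0*dL (m+3) + r0*dR (m+3)) := by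
      linear_combination dR (m+3) * hdet
    have hyn : l0 * (l1*dL (m+4) + r1*dR (m+4)) = l1 * (l0*dL (m+4) + r0*dR (m+4)) := by
      linear_combination dR (m+4) * hdet
    have hx1 : ((m:ℝ)+4) * l1 * (l0*dL 1 + r0*dR 1) + ((m:ℝ)+3)*c0*dC 1*l1 + c2*dC 0*l0 = 0 := by
      refine mul_left_cancel₀ hl0ne ?_
      rw [mul_zero]
      linear_combination (l0*l1) * e1 + (-l1) * hy0 + (-(l1^2)) * e0 + dC 0 * key
    have hxm : ((m:ℝ)+4) * l1 * (l0*dL (m+3) + r0*dR (m+3)) + c0*dC (m+3)*l1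
        + ((m:ℝ)+3)*c2*dC (m+2)*l0 = 0 := by
      refine mul_left_cancel₀ hl1ne ?_
      rw [mul_zero]
      linear_combination (-(((m:ℝ)+4)*l1)) * hym + (l0*l1) * e3 + l0 * hyn
        + (-(l0^2)) * e4 + dC (m+3) * key
    refine ⟨fun s => if s < 2 ∨ m + 2 < s then dL s else
        (-(((m:ℝ) + 4 - (s:ℝ)) * c0 * dC s) * l1 - (s:ℝ) * c2 * dC (s-1) * l0)
          / (((m:ℝ) + 4) * l0 * l1),
      fun s => if s < 2 ∨ m + 2 < s then dR s else 0,
      by norm_num, by norm_num, ?_, by norm_num, by norm_num, by norm_num, ?_, by norm_num, ?_⟩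
    · simp only [show m+4-1 = m+3 from rfl]
      rw [if_pos (Or.inr (by omega : m+2 < m+3))]
    · simp only [show m+4-1 = m+3 from rfl]
      rw [if_pos (Or.inr (by omega : m+2 < m+3))]
    intro s hs2 hsle
    simp only [show m+4-1 = m+3 from rfl] at hsle
    simp only [EqS]
    rcases eq_or_ne s 2 with rfl | hne2
    · simp only [show (2:ℕ)-1 = 1 from rfl, show (2:ℕ)-2 = 0 from rfl,
        if_neg (by omega : ¬((2:ℕ) < 2 ∨ m+2 < 2)), if_pos (by omega : (1:ℕ) < 2 ∨ m+2 < 1)]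
      push_cast
      have hy1F : l1 * dL 1 + r1 * dR 1 =
          l1 * ((-((((m:ℝ)+4) - 1) * c0 * dC 1) * l1 - 1 * c2 * dC 0 * l0)
            / (((m:ℝ)+4) * l0 * l1)) := by
        field_simp
        linear_combination ((m:ℝ)+4) * hy1 + hx1
      linear_combination degId ((m:ℝ)+4) 2 c0 c1 c2 l0 l1 (dC 2) (dC 1) (dC 0)
        hm hl0ne hl1ne key + 2 * hy1F
    rcases eq_or_ne s (m+3) with rfl | hnem
    · simp only [show m+3-1 = m+2 from rfl, show m+3-2 = m+1 from rfl,
        show m+2-1 = m+1 from rfl,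
        if_pos (Or.inr (by omega : m+2 < m+3)), if_neg (by omega : ¬(m+2 < 2 ∨ m+2 < m+2))]
      push_cast
      have hxF : l0 * dL (m+3) + r0 * dR (m+3) =
          l0 * ((-((((m:ℝ)+4) - ((m:ℝ)+3)) * c0 * dC (m+3)) * l1
            - ((m:ℝ)+3) * c2 * dC (m+2) * l0) / (((m:ℝ)+4) * l0 * l1)) := by
        field_simp
        linear_combination hxm
      linear_combination degId ((m:ℝ)+4) ((m:ℝ)+3) c0 c1 c2 l0 l1 (dC (m+3)) (dC (m+2))
        (dC (m+1)) hm hl0ne hl1ne key + 2 * hxF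
    · obtain ⟨k, rfl⟩ : ∃ k, s = k+3 := ⟨s-3, by omega⟩
      simp only [show k+3-1 = k+2 from rfl, show k+3-2 = k+1 from rfl,
        show k+2-1 = k+1 from rfl,
        if_neg (by omega : ¬(k+3 < 2 ∨ m+2 < k+3)), if_neg (by omega : ¬(k+2 < 2 ∨ m+2 < k+2))]
      push_cast
      linear_combination degId ((m:ℝ)+4) ((k:ℝ)+3) c0 c1 c2 l0 l1 (dC (k+3)) (dC (k+2))
        (dC (k+1)) hm hl0ne hl1ne key
  · -- nondegenerate case
    refine ⟨fun s => if s < 2 ∨ m + 2 < s then dL s else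
        (r1 * (-(((m:ℝ) + 4 - (s:ℝ)) / ((m:ℝ) + 4)) * c0 * dC s
            - ((s:ℝ) / ((m:ℝ) + 4)) * c1 * dC (s - 1) +
          (if s = 2 then (2 / ((m:ℝ) + 3)) * ((-(((m:ℝ) + 3) / ((m:ℝ) + 4)) * c1 * dC 1
            - (1 / ((m:ℝ) + 4)) * c2 * dC 0) - (l1 * dL 1 + r1 * dR 1)) else 0))
         - r0 * (-(((m:ℝ) + 4 - (s:ℝ)) / ((m:ℝ) + 4)) * c1 * dC s
            - ((s:ℝ) / ((m:ℝ) + 4)) * c2 * dC (s - 1) +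
          (if s = m + 2 then (2 / ((m:ℝ) + 3)) * ((-(1 / ((m:ℝ) + 4)) * c0 * dC (m + 3)
            - (((m:ℝ) + 3) / ((m:ℝ) + 4)) * c1 * dC (m + 2))
            - (l0 * dL (m + 3) + r0 * dR (m + 3))) else 0))) / (l0 * r1 - l1 * r0),
      fun s => if s < 2 ∨ m + 2 < s then dR s else
        (l0 * (-(((m:ℝ) + 4 - (s:ℝ)) / ((m:ℝ) + 4)) * c1 * dC s
            - ((s:ℝ) / ((m:ℝ) + 4)) * c2 * dC (s - 1) +
          (if s = m + 2 then (2 / ((m:ℝ) + 3)) * ((-(1 / ((m:ℝ) + 4)) * c0 * dC (m + 3)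
            - (((m:ℝ) + 3) / ((m:ℝ) + 4)) * c1 * dC (m + 2))
            - (l0 * dL (m + 3) + r0 * dR (m + 3))) else 0))
         - l1 * (-(((m:ℝ) + 4 - (s:ℝ)) / ((m:ℝ) + 4)) * c0 * dC s
            - ((s:ℝ) / ((m:ℝ) + 4)) * c1 * dC (s - 1) +
          (if s = 2 then (2 / ((m:ℝ) + 3)) * ((-(((m:ℝ) + 3) / ((m:ℝ) + 4)) * c1 * dC 1
            - (1 / ((m:ℝ) + 4)) * c2 * dC 0) - (l1 * dL 1 + r1 * dR 1)) else 0))) / (l0 * r1 - l1 * r0),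
      by norm_num, by norm_num, ?_, by norm_num, by norm_num, by norm_num, ?_, by norm_num, ?_⟩
    · simp only [show m+4-1 = m+3 from rfl]
      rw [if_pos (Or.inr (by omega : m+2 < m+3))]
    · simp only [show m+4-1 = m+3 from rfl]
      rw [if_pos (Or.inr (by omega : m+2 < m+3))]
    intro s hs2 hsle
    simp only [show m+4-1 = m+3 from rfl] at hsle
    simp only [EqS]
    rcases eq_or_ne s 2 with rfl | hne2
    · simp only [show (2:ℕ)-1 = 1 from rfl, show (2:ℕ)-2 = 0 from rfl,
        if_neg (by omega : ¬((2:ℕ) < 2 ∨ m+2 < 2)), if_pos (by omega : (1:ℕ) < 2 ∨ m+2 < 1),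
        if_pos (rfl : (2:ℕ) = 2)]
      rw [show (l0 * r1 - l1 * r0) = (l0 * r1 - l1 * r0) from rfl]
      rw [solveX l0 l1 r0 r1 _ _ hdet]
      push_cast
      field_simp
      ring
    rcases eq_or_ne s (m+3) with rfl | hnem
    · simp only [show m+3-1 = m+2 from rfl, show m+3-2 = m+1 from rfl,
        show m+2-1 = m+1 from rfl,
        if_pos (Or.inr (by omega : m+2 < m+3)), if_neg (by omega : ¬(m+2 < 2 ∨ m+2 < m+2)),
        if_pos (rfl : m+2 = m+2)]
      rw [solveY l0 l1 r0 r1 _ _ hdet]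
      push_cast
      field_simp
      ring
    · obtain ⟨k, rfl⟩ : ∃ k, s = k+3 := ⟨s-3, by omega⟩
      simp only [show k+3-1 = k+2 from rfl, show k+3-2 = k+1 from rfl,
        show k+2-1 = k+1 from rfl,
        if_neg (by omega : ¬(k+3 < 2 ∨ m+2 < k+3)), if_neg (by omega : ¬(k+2 < 2 ∨ m+2 < k+2)),
        if_neg (by omega : ¬(k+3 = 2)), if_neg (by omega : ¬(k+2 = m+2))]
      rw [solveX l0 l1 r0 r1 _ _ hdet, solveY l0 l1 r0 r1 _ _ hdet]
      push_cast
      field_simp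
      ring
end

section
/- Let n ≥ 4 be an integer and let l₀, l₁, r₀, r₁ be nonzero reals. Let Â be the real matrix with rows indexed by s ∈ {2,…,n−1} and columns indexed by pairs (t,σ) with t ∈ {2,…,n−2} and σ ∈ {L,R}, with entries Â[s,(t,L)] = (n+1−t)·l₀ if s = t, (t+1)·l₁ if s = t+1, 0 otherwise, and Â[s,(t,R)] = (n+1−t)·r₀ if s = t, (t+1)·r₁ if s = t+1, 0 otherwise. Then the rank of Â equals n−2 (full row rank) if l₀r₁ − r₀l₁ ≠ 0, i.e. when the "Projections Relation" does not hold, and the rank of Â equals n−3 if l₀r₁ − r₀l₁ = 0, i.e. when the "Projections Relation" holds. -/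
open Matrix


/-- Rank of the "Middle" system matrix `Â` (rows indexed by `s = i+2 ∈ {2,…,n−1}`,
columns by `(t,σ)` with `t = j+2 ∈ {2,…,n−2}` and `σ ∈ {L,R}` modeled by `Bool`,
`true` standing for `L`): full row rank `n−2` when the "Projections Relation"
`l₀r₁ − r₀l₁ = 0` fails and rank `n−3` when it holds. -/
theorem stmt12 (n : ℕ) (hn : 4 ≤ n)
    (l0 l1 r0 r1 : ℝ)
    (hl0 : l0 ≠ 0) (hl1 : l1 ≠ 0) (hr0 : r0 ≠ 0) (hr1 : r1 ≠ 0)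
    (A : Matrix (Fin (n - 2)) (Fin (n - 3) × Bool) ℝ)
    (hAL : ∀ (i : Fin (n - 2)) (j : Fin (n - 3)),
      A i (j, true) =
        if (i : ℕ) = (j : ℕ) then ((n : ℝ) + 1 - (((j : ℕ) + 2 : ℕ) : ℝ)) * l0
        else if (i : ℕ) = (j : ℕ) + 1 then ((((j : ℕ) + 2 : ℕ) : ℝ) + 1) * l1
        else 0)
    (hAR : ∀ (i : Fin (n - 2)) (j : Fin (n - 3)),
      A i (j, false) =
        if (i : ℕ) = (j : ℕ) then ((n : ℝ) + 1 - (((j : ℕ) + 2 : ℕ) : ℝ)) * r0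
        else if (i : ℕ) = (j : ℕ) + 1 then ((((j : ℕ) + 2 : ℕ) : ℝ) + 1) * r1
        else 0) :
    (l0 * r1 - r0 * l1 ≠ 0 → A.rank = n - 2) ∧
    (l0 * r1 - r0 * l1 = 0 → A.rank = n - 3) := by
  classical
  have hrank : A.rank = Module.finrank ℝ (Submodule.span ℝ (Set.range Aᵀ)) :=
    A.rank_eq_finrank_span_cols
  have hcol : ∀ p, Aᵀ p ∈ Submodule.span ℝ (Set.range Aᵀ) :=
    fun p => Submodule.subset_span ⟨p, rfl⟩
  constructor
  · -- non-degenerate case : full row rank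
    intro hd
    -- the standard basis vectors with index < n-3
    have hEj : ∀ j : Fin (n-3),
        (fun i : Fin (n-2) => if (i : ℕ) = (j : ℕ) then (1:ℝ) else 0)
          ∈ Submodule.span ℝ (Set.range Aᵀ) := by
      intro j
      have hj2 : (j : ℕ) < n - 3 := j.2
      have hαpos : (0:ℝ) < (n : ℝ) + 1 - (((j : ℕ) + 2 : ℕ) : ℝ) := by
        have h2 : ((j : ℕ) + 2 : ℕ) < n + 1 := by omega
        have h3 : ((((j : ℕ) + 2 : ℕ)) : ℝ) < (n : ℝ) + 1 := by exact_mod_cast h2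
        linarith
      set c : ℝ := ((n : ℝ) + 1 - (((j : ℕ) + 2 : ℕ) : ℝ)) * (l0*r1 - r0*l1) with hc
      have hcne : c ≠ 0 := mul_ne_zero hαpos.ne' hd
      have key : (fun i : Fin (n-2) => if (i : ℕ) = (j : ℕ) then (1:ℝ) else 0)
          = c⁻¹ • (r1 • Aᵀ (j, true) - l1 • Aᵀ (j, false)) := by
        funext i
        simp only [Pi.smul_apply, Pi.sub_apply, Matrix.transpose_apply, smul_eq_mul,
          hAL, hAR]
        rcases eq_or_ne ((i : ℕ)) ((j : ℕ)) with h | h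
        · rw [if_pos h, if_pos h, if_pos h]
          have hX : r1 * (((n : ℝ) + 1 - (((j : ℕ) + 2 : ℕ) : ℝ)) * l0)
              - l1 * (((n : ℝ) + 1 - (((j : ℕ) + 2 : ℕ) : ℝ)) * r0) = c := by
            rw [hc]; ring
          rw [hX, inv_mul_cancel₀ hcne]
        · rw [if_neg h, if_neg h, if_neg h]
          rcases eq_or_ne ((i : ℕ)) ((j : ℕ) + 1) with h' | h'
          · rw [if_pos h', if_pos h']; ring
          · rw [if_neg h', if_neg h']; ring
      rw [key]
      exact Submodule.smul_mem _ _ (Submodule.sub_mem _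
        (Submodule.smul_mem _ _ (hcol _)) (Submodule.smul_mem _ _ (hcol _)))
    have hE : ∀ k : Fin (n-2),
        (fun i : Fin (n-2) => if k = i then (1:ℝ) else 0)
          ∈ Submodule.span ℝ (Set.range Aᵀ) := by
      intro k
      rcases lt_or_ge (k : ℕ) (n-3) with hk | hk
      · have heq : (fun i : Fin (n-2) => if k = i then (1:ℝ) else 0)
            = fun i : Fin (n-2) =>
              if (i : ℕ) = (((⟨(k:ℕ), hk⟩ : Fin (n-3))) : ℕ) then (1:ℝ) else 0 := by
          funext i
          by_cases h : k = i
          · subst h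
            rw [if_pos rfl, if_pos rfl]
          · rw [if_neg h, if_neg (fun hh => h (Fin.ext hh.symm))]
        rw [heq]
        exact hEj _
      · have hk2 : (k : ℕ) < n - 2 := k.2
        have hkval : (k : ℕ) = n - 3 := by omega
        obtain ⟨jl, hjlv⟩ : ∃ jl : Fin (n-3), (jl : ℕ) = n - 4 :=
          ⟨⟨n-4, by omega⟩, rfl⟩
        have hbne : ((((jl : ℕ) + 2 : ℕ) : ℝ) + 1) * l1 ≠ 0 := by
          apply mul_ne_zero _ hl1
          positivity
        have key : (fun i : Fin (n-2) => if k = i then (1:ℝ) else 0)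
            = (((((jl : ℕ) + 2 : ℕ) : ℝ) + 1) * l1)⁻¹ •
              (Aᵀ (jl, true) - (((n : ℝ) + 1 - (((jl : ℕ) + 2 : ℕ) : ℝ)) * l0) •
                (fun i : Fin (n-2) => if (i : ℕ) = ((jl : ℕ)) then (1:ℝ) else 0)) := by
          funext i
          simp only [Pi.smul_apply, Pi.sub_apply, Matrix.transpose_apply, smul_eq_mul, hAL]
          rcases eq_or_ne ((i : ℕ)) ((jl : ℕ)) with h | h
          · have hki : k ≠ i := Fin.ne_of_val_ne (by omega)
            simp only [if_neg hki, if_pos h]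
            ring
          · rcases eq_or_ne ((i : ℕ)) ((jl : ℕ) + 1) with h' | h'
            · have hki : k = i := Fin.ext (by omega)
              simp only [if_pos hki, if_neg h, if_pos h']
              rw [mul_zero, sub_zero, inv_mul_cancel₀ hbne]
            · have hki : k ≠ i := Fin.ne_of_val_ne (by omega)
              simp only [if_neg hki, if_neg h, if_neg h']
              ring
        rw [key]
        exact Submodule.smul_mem _ _ (Submodule.sub_mem _ (hcol _)
          (Submodule.smul_mem _ _ (hEj jl)))
    have hspan : Submodule.span ℝ (Set.range Aᵀ) = ⊤ := by
      rw [eq_top_iff]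
      rintro x -
      rw [pi_eq_sum_univ x]
      exact Submodule.sum_mem _ fun i _ => Submodule.smul_mem _ _ (hE i)
    rw [hrank, hspan, finrank_top, Module.finrank_fintype_fun_eq_card, Fintype.card_fin]
  · -- degenerate case
    intro hd
    have hrel : l0 * r1 = r0 * l1 := by linarith
    set f : Fin (n-3) → (Fin (n-2) → ℝ) := fun j => Aᵀ (j, true) with hf
    have hfalse : ∀ j : Fin (n-3), Aᵀ (j, false) = (r0/l0) • f j := by
      intro j
      funext i
      simp only [hf, Matrix.transpose_apply, Pi.smul_apply, smul_eq_mul, hAL, hAR]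
      rcases eq_or_ne ((i : ℕ)) ((j : ℕ)) with h | h
      · rw [if_pos h, if_pos h]
        rw [div_mul_eq_mul_div, eq_div_iff hl0]
        ring
      · rw [if_neg h, if_neg h]
        rcases eq_or_ne ((i : ℕ)) ((j : ℕ) + 1) with h' | h'
        · rw [if_pos h', if_pos h']
          rw [div_mul_eq_mul_div, eq_div_iff hl0]
          push_cast
          linear_combination (((j : ℕ) : ℝ) + 3) * hrel
        · rw [if_neg h', if_neg h']
          ring
    have hspan2 : Submodule.span ℝ (Set.range Aᵀ) = Submodule.span ℝ (Set.range f) := by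
      apply le_antisymm
      · rw [Submodule.span_le]
        rintro _ ⟨⟨j, σ⟩, rfl⟩
        cases σ
        · rw [hfalse j]
          exact Submodule.smul_mem _ _ (Submodule.subset_span ⟨j, rfl⟩)
        · exact Submodule.subset_span ⟨j, rfl⟩
      · rw [Submodule.span_le]
        rintro _ ⟨j, rfl⟩
        exact hcol _
    have hli : LinearIndependent ℝ f := by
      rw [Fintype.linearIndependent_iff]
      intro g hg
      have main : ∀ N : ℕ, ∀ j : Fin (n-3), (j : ℕ) = N → g j = 0 := by
        intro N
        induction N using Nat.strong_induction_on with
        | _ N ih =>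
          intro j hjN
          have hj2 : (j : ℕ) < n - 3 := j.2
          have hrow : (∑ t, g t • f t) (⟨(j : ℕ), by omega⟩ : Fin (n-2)) = 0 := by
            rw [hg]; rfl
          rw [Finset.sum_apply] at hrow
          have hsum : ∀ t : Fin (n-3), (g t • f t) (⟨(j : ℕ), by omega⟩ : Fin (n-2))
              = if t = j then g j * (((n : ℝ) + 1 - (((j : ℕ) + 2 : ℕ) : ℝ)) * l0) else 0 := by
            intro t
            simp only [Pi.smul_apply, smul_eq_mul, hf, Matrix.transpose_apply, hAL]
            rcases eq_or_ne t j with h | h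
            · subst h
              rw [if_pos rfl, if_pos rfl]
            · rw [if_neg h, if_neg (fun hh : (j : ℕ) = (t : ℕ) => h (Fin.ext hh.symm))]
              rcases eq_or_ne ((j : ℕ)) ((t : ℕ) + 1) with h' | h'
              · have hgt : g t = 0 := ih (t : ℕ) (by omega) t rfl
                rw [if_pos h', hgt, zero_mul]
              · rw [if_neg h', mul_zero]
          rw [Finset.sum_congr rfl (fun t _ => hsum t), Finset.sum_ite_eq' Finset.univ j
            (fun _ => g j * (((n : ℝ) + 1 - (((j : ℕ) + 2 : ℕ) : ℝ)) * l0)),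
            if_pos (Finset.mem_univ j)] at hrow
          have hαpos : (0:ℝ) < (n : ℝ) + 1 - (((j : ℕ) + 2 : ℕ) : ℝ) := by
            have h2 : ((j : ℕ) + 2 : ℕ) < n + 1 := by omega
            have h3 : ((((j : ℕ) + 2 : ℕ)) : ℝ) < (n : ℝ) + 1 := by exact_mod_cast h2
            linarith
          have := mul_ne_zero hαpos.ne' hl0
          rcases mul_eq_zero.mp hrow with h | h
          · exact h
          · exact absurd h this
      intro j
      exact main (j : ℕ) j rfl
    rw [hrank, hspan2, finrank_span_eq_card hli, Fintype.card_fin]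
end

section
/- Let n ≥ 1 be an integer, let κ ≠ 0 and α₂ be reals, let c₀, c₁, c₂ ∈ ℝ, and let ΔC₀,…,ΔC_{n−1} ∈ ℝ (with ΔC_j = 0 for j outside 0,…,n−1). For s = 0,…,n+1 define α_s = (2/(n(n+1)))·C(n+1,s)·(−1)^s·κ^{s−2}·α₂ and sumC_s = (1/n)[(n−s)(n+1−s)·c₀·ΔC_s + 2s(n+1−s)·c₁·ΔC_{s−1} + s(s−1)·c₂·ΔC_{s−2}]. Then −∑_{s=0}^{n+1} α_s · sumC_s = −(2α₂/(n·κ²)) · (∑_{s=0}^{n−1} (−1)^s C(n−1,s) κ^s ΔC_s) · (c₀ − 2κc₁ + κ²c₂). -/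
open Finset

private noncomputable def g0aux (n : ℕ) (κ α2 c0 : ℝ) (dC : ℕ → ℝ) (s : ℕ) : ℝ :=
  ((2 / ((n : ℝ) * ((n : ℝ) + 1))) * ((n + 1).choose s : ℝ) * (-1 : ℝ) ^ s *
      (κ ^ s / κ ^ 2) * α2) *
    ((1 / (n : ℝ)) * (((n : ℝ) - (s : ℝ)) * ((n : ℝ) + 1 - (s : ℝ)) * c0 * dC s))

private noncomputable def g1aux (n : ℕ) (κ α2 c1 : ℝ) (dC : ℕ → ℝ) (s : ℕ) : ℝ :=
  ((2 / ((n : ℝ) * ((n : ℝ) + 1))) * ((n + 1).choose s : ℝ) * (-1 : ℝ) ^ s *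
      (κ ^ s / κ ^ 2) * α2) *
    ((1 / (n : ℝ)) * (2 * (s : ℝ) * ((n : ℝ) + 1 - (s : ℝ)) * c1 * dC (s - 1)))

private noncomputable def g2aux (n : ℕ) (κ α2 c2 : ℝ) (dC : ℕ → ℝ) (s : ℕ) : ℝ :=
  ((2 / ((n : ℝ) * ((n : ℝ) + 1))) * ((n + 1).choose s : ℝ) * (-1 : ℝ) ^ s *
      (κ ^ s / κ ^ 2) * α2) *
    ((1 / (n : ℝ)) * ((s : ℝ) * ((s : ℝ) - 1) * c2 * dC (s - 2)))

private lemma keyA (n j : ℕ) (hn : 1 ≤ n) :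
    (n + 1).choose (j + 2) * ((j + 2) * (j + 1)) = (n + 1) * (n * ((n - 1).choose j)) := by
  obtain ⟨m, rfl⟩ : ∃ m, n = m + 1 := ⟨n - 1, by omega⟩
  have h1 := Nat.add_one_mul_choose_eq (m + 1) (j + 1)
  have h2 := Nat.add_one_mul_choose_eq m j
  calc (m + 1 + 1).choose (j + 2) * ((j + 2) * (j + 1))
      = ((m + 1 + 1).choose (j + 1 + 1) * (j + 1 + 1)) * (j + 1) := by ring_nf
    _ = ((m + 1 + 1) * (m + 1).choose (j + 1)) * (j + 1) := by rw [← h1]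
    _ = (m + 1 + 1) * ((m + 1).choose (j + 1) * (j + 1)) := by ring
    _ = (m + 1 + 1) * ((m + 1) * m.choose j) := by rw [← h2]
    _ = (m + 1 + 1) * ((m + 1 - 1 + 1) * ((m + 1 - 1).choose j)) := by simp

private lemma keyB (n j : ℕ) (hn : 1 ≤ n) :
    (n + 1).choose (j + 1) * ((j + 1) * (n - j)) = (n + 1) * (n * ((n - 1).choose j)) := by
  obtain ⟨m, rfl⟩ : ∃ m, n = m + 1 := ⟨n - 1, by omega⟩
  have h1 := Nat.add_one_mul_choose_eq (m + 1) j
  have h2 := Nat.choose_succ_right_eq (m + 1) j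
  have h3 := Nat.add_one_mul_choose_eq m j
  calc (m + 1 + 1).choose (j + 1) * ((j + 1) * (m + 1 - j))
      = ((m + 1 + 1).choose (j + 1) * (j + 1)) * (m + 1 - j) := by ring
    _ = ((m + 1 + 1) * (m + 1).choose j) * (m + 1 - j) := by rw [← h1]
    _ = (m + 1 + 1) * ((m + 1).choose j * (m + 1 - j)) := by ring
    _ = (m + 1 + 1) * ((m + 1).choose (j + 1) * (j + 1)) := by rw [← h2]
    _ = (m + 1 + 1) * ((m + 1) * m.choose j) := by rw [← h3]
    _ = (m + 1 + 1) * ((m + 1 - 1 + 1) * ((m + 1 - 1).choose j)) := by simp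

private lemma keyC (n j : ℕ) (hn : 1 ≤ n) :
    (n + 1).choose j * ((n - j) * (n + 1 - j)) = (n + 1) * (n * ((n - 1).choose j)) := by
  have h1 := Nat.choose_succ_right_eq (n + 1) j
  have h2 := keyB n j hn
  calc (n + 1).choose j * ((n - j) * (n + 1 - j))
      = ((n + 1).choose j * (n + 1 - j)) * (n - j) := by ring
    _ = ((n + 1).choose (j + 1) * (j + 1)) * (n - j) := by rw [← h1]
    _ = (n + 1).choose (j + 1) * ((j + 1) * (n - j)) := by ring
    _ = (n + 1) * (n * ((n - 1).choose j)) := h2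

private lemma keyA' (n j : ℕ) (hn : 1 ≤ n) :
    (((n + 1).choose (j + 2) : ℝ)) * (((j : ℝ) + 2) * ((j : ℝ) + 1))
      = ((n : ℝ) + 1) * ((n : ℝ) * (((n - 1).choose j : ℝ))) := by
  exact_mod_cast congrArg (Nat.cast : ℕ → ℝ) (keyA n j hn)

private lemma keyB' (n j : ℕ) (hj : j < n) :
    (((n + 1).choose (j + 1) : ℝ)) * (((j : ℝ) + 1) * ((n : ℝ) - (j : ℝ)))
      = ((n : ℝ) + 1) * ((n : ℝ) * (((n - 1).choose j : ℝ))) := by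
  have e1 : ((n : ℝ) - (j : ℝ)) = ((n - j : ℕ) : ℝ) := by
    rw [Nat.cast_sub hj.le]
  rw [e1]
  exact_mod_cast congrArg (Nat.cast : ℕ → ℝ) (keyB n j (by omega))

private lemma keyC' (n j : ℕ) (hj : j < n) :
    (((n + 1).choose j : ℝ)) * (((n : ℝ) - (j : ℝ)) * ((n : ℝ) + 1 - (j : ℝ)))
      = ((n : ℝ) + 1) * ((n : ℝ) * (((n - 1).choose j : ℝ))) := by
  have e1 : ((n : ℝ) - (j : ℝ)) = ((n - j : ℕ) : ℝ) := by rw [Nat.cast_sub hj.le]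
  have e2 : ((n : ℝ) + 1 - (j : ℝ)) = ((n + 1 - j : ℕ) : ℝ) := by
    rw [Nat.cast_sub (by omega)]; push_cast; ring
  rw [e1, e2]
  exact_mod_cast congrArg (Nat.cast : ℕ → ℝ) (keyC n j (by omega))

/-- The linear combination `−∑_{s=0}^{n+1} α_s · sumC_s` of the right-side coefficients
of the "Middle" system, with `α_s = (2/(n(n+1)))·C(n+1,s)·(−1)^s·κ^{s−2}·α₂`, equals
`−(2α₂/(nκ²)) · (∑_{s} (−1)^s C(n−1,s) κ^s ΔC_s) · (c₀ − 2κc₁ + κ²c₂)`. -/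
theorem stmt13 (n : ℕ) (hn : 1 ≤ n) (κ α2 c0 c1 c2 : ℝ) (hκ : κ ≠ 0)
    (dC : ℕ → ℝ) (hdC : ∀ j, n ≤ j → dC j = 0) :
    -(∑ s ∈ range (n + 2),
        ((2 / ((n : ℝ) * ((n : ℝ) + 1))) * ((n + 1).choose s : ℝ) * (-1 : ℝ) ^ s *
            κ ^ ((s : ℤ) - 2) * α2) *
          ((1 / (n : ℝ)) * (((n : ℝ) - (s : ℝ)) * ((n : ℝ) + 1 - (s : ℝ)) * c0 * dC s
            + 2 * (s : ℝ) * ((n : ℝ) + 1 - (s : ℝ)) * c1 * dC (s - 1)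
            + (s : ℝ) * ((s : ℝ) - 1) * c2 * dC (s - 2))))
    = -(2 * α2 / ((n : ℝ) * κ ^ 2)) *
        (∑ s ∈ range n, (-1 : ℝ) ^ s * ((n - 1).choose s : ℝ) * κ ^ s * dC s) *
        (c0 - 2 * κ * c1 + κ ^ 2 * c2) := by
  have hκ2 : κ ^ 2 ≠ 0 := pow_ne_zero _ hκ
  have hn0 : (n : ℝ) ≠ 0 := Nat.cast_ne_zero.mpr (by omega)
  have hzp : ∀ s : ℕ, κ ^ ((s : ℤ) - 2) = κ ^ s / κ ^ 2 := by
    intro s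
    rw [zpow_sub₀ hκ, zpow_natCast]
    norm_num [zpow_two, sq]
  have step1 : ∀ s : ℕ,
      ((2 / ((n : ℝ) * ((n : ℝ) + 1))) * ((n + 1).choose s : ℝ) * (-1 : ℝ) ^ s *
            κ ^ ((s : ℤ) - 2) * α2) *
          ((1 / (n : ℝ)) * (((n : ℝ) - (s : ℝ)) * ((n : ℝ) + 1 - (s : ℝ)) * c0 * dC s
            + 2 * (s : ℝ) * ((n : ℝ) + 1 - (s : ℝ)) * c1 * dC (s - 1)
            + (s : ℝ) * ((s : ℝ) - 1) * c2 * dC (s - 2)))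
        = g0aux n κ α2 c0 dC s + g1aux n κ α2 c1 dC s + g2aux n κ α2 c2 dC s := by
    intro s
    simp only [g0aux, g1aux, g2aux]
    rw [hzp s]
    ring
  simp only [step1]
  rw [Finset.sum_add_distrib, Finset.sum_add_distrib]
  have h0 : ∑ s ∈ range (n + 2), g0aux n κ α2 c0 dC s
      = ∑ j ∈ range n, g0aux n κ α2 c0 dC j := by
    refine (Finset.sum_subset (Finset.range_subset_range.mpr (by omega)) ?_).symm
    intro s _ hs
    have : n ≤ s := by simpa using hs
    simp [g0aux, hdC s this]
  have h1 : ∑ s ∈ range (n + 2), g1aux n κ α2 c1 dC s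
      = ∑ j ∈ range n, g1aux n κ α2 c1 dC (j + 1) := by
    rw [Finset.sum_range_succ' _ (n + 1)]
    have hz : g1aux n κ α2 c1 dC 0 = 0 := by simp [g1aux]
    rw [hz, add_zero]
    refine (Finset.sum_subset (Finset.range_subset_range.mpr (by omega)) ?_).symm
    intro s hst hs
    have hsn : n ≤ s := by
      simp only [Finset.mem_range] at hst hs
      omega
    simp [g1aux, hdC s hsn]
  have h2 : ∑ s ∈ range (n + 2), g2aux n κ α2 c2 dC s
      = ∑ j ∈ range n, g2aux n κ α2 c2 dC (j + 2) := by
    rw [Finset.sum_range_succ' _ (n + 1), Finset.sum_range_succ' _ n]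
    have hz0 : g2aux n κ α2 c2 dC 0 = 0 := by simp [g2aux]
    have hz1 : g2aux n κ α2 c2 dC (0 + 1) = 0 := by norm_num [g2aux]
    rw [hz0, hz1, add_zero, add_zero]
  rw [h0, h1, h2, ← Finset.sum_add_distrib, ← Finset.sum_add_distrib,
    ← Finset.sum_neg_distrib, Finset.mul_sum, Finset.sum_mul]
  refine Finset.sum_congr rfl fun j hj => ?_
  have hjn : j < n := Finset.mem_range.mp hj
  have hnj : (n : ℝ) - (j : ℝ) ≠ 0 := by
    have : (j : ℝ) < (n : ℝ) := by exact_mod_cast hjn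
    intro h; linarith
  have hnj1 : (n : ℝ) + 1 - (j : ℝ) ≠ 0 := by
    have : (j : ℝ) < (n : ℝ) := by exact_mod_cast hjn
    intro h; linarith
  have hj1 : ((j : ℝ) + 1) ≠ 0 := by positivity
  have hj2 : ((j : ℝ) + 2) ≠ 0 := by positivity
  have hC0 : ((n + 1).choose j : ℝ)
      = ((n : ℝ) + 1) * ((n : ℝ) * (((n - 1).choose j : ℝ)))
        / (((n : ℝ) - (j : ℝ)) * ((n : ℝ) + 1 - (j : ℝ))) := by
    rw [eq_div_iff (mul_ne_zero hnj hnj1)]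
    exact keyC' n j hjn
  have hC1 : ((n + 1).choose (j + 1) : ℝ)
      = ((n : ℝ) + 1) * ((n : ℝ) * (((n - 1).choose j : ℝ)))
        / (((j : ℝ) + 1) * ((n : ℝ) - (j : ℝ))) := by
    rw [eq_div_iff (mul_ne_zero hj1 hnj)]
    exact keyB' n j hjn
  have hC2 : ((n + 1).choose (j + 2) : ℝ)
      = ((n : ℝ) + 1) * ((n : ℝ) * (((n - 1).choose j : ℝ)))
        / (((j : ℝ) + 2) * ((j : ℝ) + 1)) := by
    rw [eq_div_iff (mul_ne_zero hj2 hj1)]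
    exact keyA' n j (by omega)
  simp only [g0aux, g1aux, g2aux, Nat.add_sub_cancel]
  push_cast
  rw [hC0, hC1, hC2]
  field_simp
  ring
end

section
/- Consider two adjacent bilinearly parametrised quadrilateral elements with vertices λ̃, λ̃', γ̃, γ̃', ρ̃, ρ̃' ∈ ℝ², where both the left quadrilateral (λ̃, γ̃, γ̃', λ̃') and the right quadrilateral (γ̃, ρ̃, ρ̃', γ̃') are strictly convex in counterclockwise order (this guarantees that the weight coefficients l₀, l₁, r₀, r₁ are nonzero). Suppose the "Projections Relation" l₀r₁ = r₀l₁ holds, and set κ = l₀/l₁ (= r₀/r₁). Then the coefficients of the weight function c satisfy c₀ − 2κ·c₁ + κ²·c₂ = 0. -/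
/-- For two adjacent strictly convex bilinearly parametrised quadrilateral elements
satisfying the "Projections Relation" `l₀r₁ = r₀l₁`, the coefficients of the weight
function `c` satisfy `c₀ − 2κc₁ + κ²c₂ = 0` with `κ = l₀/l₁`. -/
theorem stmt14 (lam lam' gam gam' rho rho' : ℝ × ℝ)
    (hconvL1 : 0 < cross2 (gam - lam) (gam' - gam))
    (hconvL2 : 0 < cross2 (gam' - gam) (lam' - gam'))
    (hconvL3 : 0 < cross2 (lam' - gam') (lam - lam'))
    (hconvL4 : 0 < cross2 (lam - lam') (gam - lam))
    (hconvR1 : 0 < cross2 (rho - gam) (rho' - rho))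
    (hconvR2 : 0 < cross2 (rho' - rho) (gam' - rho'))
    (hconvR3 : 0 < cross2 (gam' - rho') (gam - gam'))
    (hconvR4 : 0 < cross2 (gam - gam') (rho - gam))
    (l0 l1 r0 r1 c0 c1 c2 : ℝ)
    (hl0 : l0 = cross2 (rho - gam) (gam' - gam))
    (hl1 : l1 = cross2 (gam - gam') (rho' - gam'))
    (hr0 : r0 = -cross2 (gam' - gam) (lam - gam))
    (hr1 : r1 = -cross2 (lam' - gam') (gam - gam'))
    (hc0 : c0 = cross2 (rho - gam) (lam - gam))
    (hc1 : c1 = (1/2) * (cross2 (rho - gam) (lam' - gam') - cross2 (lam - gam) (rho' - gam')))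
    (hc2 : c2 = -cross2 (lam' - gam') (rho' - gam'))
    (hPR : l0 * r1 = r0 * l1) :
    c0 - 2 * (l0 / l1) * c1 + (l0 / l1) ^ 2 * c2 = 0 := by
  have hl1ne : l1 ≠ 0 := by
    rw [hl1]
    have h : cross2 (gam - gam') (rho' - gam') = cross2 (gam' - rho') (gam - gam') := by
      simp only [cross2, Prod.fst_sub, Prod.snd_sub]; ring
    rw [h]; exact ne_of_gt hconvR3
  have key : c0 * l1 ^ 2 - 2 * l0 * l1 * c1 + l0 ^ 2 * c2 = 0 := by
    subst hl0 hl1 hr0 hr1 hc0 hc1 hc2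
    simp only [cross2, Prod.fst_sub, Prod.snd_sub] at hPR ⊢
    linear_combination (-gam.1*gam'.2 + gam.1*rho'.2 + gam.2*gam'.1 - gam.2*rho'.1
      - gam'.1*rho.2 + gam'.2*rho.1 - rho.1*rho'.2 + rho.2*rho'.1) * hPR
  have h2 : c0 - 2 * (l0 / l1) * c1 + (l0 / l1) ^ 2 * c2
      = (c0 * l1 ^ 2 - 2 * l0 * l1 * c1 + l0 ^ 2 * c2) / l1 ^ 2 := by
    field_simp
  rw [h2, key, zero_div]
end

section
/- Let λ̃₀, λ̃₁, λ̃₂, ρ̃₀, ρ̃₁, ρ̃₂ ∈ ℝ² and let d̃ ∈ ℝ² be nonzero. Consider the plane polynomial curves λ̃(v) = ∑_{i=0}^{2} λ̃_i B²_i(v) and ρ̃(v) = ∑_{i=0}^{2} ρ̃_i B²_i(v), and the real polynomials l(v) = ⟨ρ̃(v), d̃⟩, r(v) = −⟨λ̃(v), d̃⟩ and c(v) = ⟨λ̃(v), ρ̃(v)⟩ (these are the conventional weight functions for an edge with one boundary vertex under the bicubic in-plane parametrisation). Then the actual polynomial degrees satisfy deg c ≤ max(deg l, deg r) + 2. In particular,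 if deg l ≤ 1 and deg r ≤ 1 then deg c ≤ 3, and if deg l = deg r = 0 then deg c ≤ 2. -/
open Polynomial

/-- degree-`n` Bernstein polynomial `B^n_i` as a real polynomial. -/
noncomputable def bernP (n i : ℕ) : Polynomial ℝ :=
  Polynomial.C (n.choose i : ℝ) * X ^ i * (1 - X) ^ (n - i)

lemma bernP_deg_le (i : ℕ) (hi : i ∈ Finset.range 3) : (bernP 2 i).natDegree ≤ 2 := by
  fin_cases hi <;> · unfold bernP; compute_degree

lemma sum_deg_le (f : ℕ → ℝ) :
    (∑ i ∈ Finset.range 3, Polynomial.C (f i) * bernP 2 i).natDegree ≤ 2 := by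
  apply Polynomial.natDegree_sum_le_of_forall_le
  intro i hi
  exact le_trans (Polynomial.natDegree_C_mul_le _ _) (bernP_deg_le i hi)

/-- For the conventional weight functions of an edge with one boundary vertex
(bicubic in-plane parametrisation), `deg c ≤ max (deg l) (deg r) + 2`;
in particular `deg l, deg r ≤ 1` gives `deg c ≤ 3`, and `deg l = deg r = 0`
gives `deg c ≤ 2`. -/
theorem stmt15 (lam rho : ℕ → ℝ × ℝ) (d : ℝ × ℝ) (hd : d ≠ 0)
    (lP rP cP : Polynomial ℝ)
    (hlP : lP = Polynomial.C d.2 * (∑ i ∈ Finset.range 3, Polynomial.C (rho i).1 * bernP 2 i)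
              - Polynomial.C d.1 * (∑ i ∈ Finset.range 3, Polynomial.C (rho i).2 * bernP 2 i))
    (hrP : rP = -(Polynomial.C d.2 * (∑ i ∈ Finset.range 3, Polynomial.C (lam i).1 * bernP 2 i)
              - Polynomial.C d.1 * (∑ i ∈ Finset.range 3, Polynomial.C (lam i).2 * bernP 2 i)))
    (hcP : cP = (∑ i ∈ Finset.range 3, Polynomial.C (lam i).1 * bernP 2 i) *
                  (∑ i ∈ Finset.range 3, Polynomial.C (rho i).2 * bernP 2 i)
              - (∑ i ∈ Finset.range 3, Polynomial.C (lam i).2 * bernP 2 i) *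
                  (∑ i ∈ Finset.range 3, Polynomial.C (rho i).1 * bernP 2 i)) :
    cP.natDegree ≤ max lP.natDegree rP.natDegree + 2 ∧
    (lP.natDegree ≤ 1 → rP.natDegree ≤ 1 → cP.natDegree ≤ 3) ∧
    (lP.natDegree = 0 → rP.natDegree = 0 → cP.natDegree ≤ 2) := by
  set Λ1 := ∑ i ∈ Finset.range 3, Polynomial.C (lam i).1 * bernP 2 i with hΛ1
  set Λ2 := ∑ i ∈ Finset.range 3, Polynomial.C (lam i).2 * bernP 2 i with hΛ2
  set P1 := ∑ i ∈ Finset.range 3, Polynomial.C (rho i).1 * bernP 2 i with hP1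
  set P2 := ∑ i ∈ Finset.range 3, Polynomial.C (rho i).2 * bernP 2 i with hP2
  have hn : d.1 ^ 2 + d.2 ^ 2 ≠ 0 := by
    intro h
    apply hd
    have h1 : d.1 = 0 := by nlinarith [sq_nonneg d.1, sq_nonneg d.2]
    have h2 : d.2 = 0 := by nlinarith [sq_nonneg d.1, sq_nonneg d.2]
    exact Prod.ext h1 h2
  set n := d.1 ^ 2 + d.2 ^ 2 with hnn
  set αP : Polynomial ℝ := Polynomial.C (d.1 / n) * Λ1 + Polynomial.C (d.2 / n) * Λ2 with hαP
  set γP : Polynomial ℝ := Polynomial.C (d.1 / n) * P1 + Polynomial.C (d.2 / n) * P2 with hγP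
  have key : cP = -(αP * lP) - rP * γP := by
    rw [hcP, hlP, hrP, hαP, hγP]
    rw [div_eq_mul_inv]
    have : Polynomial.C (d.1 * n⁻¹) = Polynomial.C d.1 * Polynomial.C n⁻¹ := by
      rw [Polynomial.C_mul]
    rw [this]
    have : Polynomial.C (d.2 / n) = Polynomial.C d.2 * Polynomial.C n⁻¹ := by
      rw [div_eq_mul_inv, Polynomial.C_mul]
    rw [this]
    have hcn : Polynomial.C (n : ℝ) * Polynomial.C (n⁻¹ : ℝ) = 1 := by
      rw [← Polynomial.C_mul, mul_inv_cancel₀ hn, Polynomial.C_1]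
    have expand : Polynomial.C (n : ℝ) = Polynomial.C d.1 * Polynomial.C d.1
        + Polynomial.C d.2 * Polynomial.C d.2 := by
      simp only [hnn, Polynomial.C_add, ← Polynomial.C_pow]; ring_nf
      simp [← Polynomial.C_pow, sq]
    rw [expand] at hcn
    linear_combination (Λ2 * P1 - Λ1 * P2) * hcn
  have hΛ1d : Λ1.natDegree ≤ 2 := sum_deg_le _
  have hΛ2d : Λ2.natDegree ≤ 2 := sum_deg_le _
  have hP1d : P1.natDegree ≤ 2 := sum_deg_le _
  have hP2d : P2.natDegree ≤ 2 := sum_deg_le _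
  have hαd : αP.natDegree ≤ 2 := by
    apply le_trans (Polynomial.natDegree_add_le _ _)
    simp only [max_le_iff]
    exact ⟨le_trans (Polynomial.natDegree_C_mul_le _ _) hΛ1d,
           le_trans (Polynomial.natDegree_C_mul_le _ _) hΛ2d⟩
  have hγd : γP.natDegree ≤ 2 := by
    apply le_trans (Polynomial.natDegree_add_le _ _)
    simp only [max_le_iff]
    exact ⟨le_trans (Polynomial.natDegree_C_mul_le _ _) hP1d,
           le_trans (Polynomial.natDegree_C_mul_le _ _) hP2d⟩
  have main : cP.natDegree ≤ max lP.natDegree rP.natDegree + 2 := by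
    rw [key]
    apply le_trans (Polynomial.natDegree_sub_le _ _)
    simp only [Polynomial.natDegree_neg, max_le_iff]
    constructor
    · apply le_trans (Polynomial.natDegree_mul_le)
      have : lP.natDegree ≤ max lP.natDegree rP.natDegree := le_max_left _ _
      omega
    · apply le_trans (Polynomial.natDegree_mul_le)
      have : rP.natDegree ≤ max lP.natDegree rP.natDegree := le_max_right _ _
      omega
  refine ⟨main, ?_, ?_⟩
  · intro h1 h2
    have := main
    omega
  · intro h1 h2
    have := main
    omega
end

section
/- Let λ̃₀, λ̃₁, λ̃₂, ρ̃₀, ρ̃₁, ρ̃₂ ∈ ℝ², let d̃ ∈ ℝ² be nonzero, and let κ ∈ ℝ. Define l_i = ⟨ρ̃_i, d̃⟩ and r_i = −⟨λ̃_i, d̃⟩ for i = 0,1,2, and c_k = (1/C(4,k))·∑_{i+j=k, 0≤i,j≤2} C(2,i)·C(2,j)·⟨λ̃_i, ρ̃_j⟩ for k = 0,…,4. If ∑_{i=0}^{2} C(2,i)·κ^i·l_i = 0 and ∑_{i=0}^{2} C(2,i)·κ^i·r_i = 0 (i.e. κ is a common root of the homogenized Bernstein forms of the weight functions l and r), then ∑_{k=0}^{4}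 C(4,k)·κ^k·c_k = 0, i.e. the weight function c vanishes at κ in the same homogenized Bernstein form. -/
open Finset

/-- If `κ` is a common root of the homogenized Bernstein forms of the weight functions
`l` and `r`, then the weight function `c` vanishes at `κ` in the same homogenized
Bernstein form. -/
theorem stmt18 (lam rho : ℕ → ℝ × ℝ) (d : ℝ × ℝ) (hd : d ≠ 0) (κ : ℝ)
    (l r c : ℕ → ℝ)
    (hl : ∀ i, i ≤ 2 → l i = cross2 (rho i) d)
    (hr : ∀ i, i ≤ 2 → r i = -cross2 (lam i) d)
    (hc : ∀ k, k ≤ 4 → c k = (1 / ((4 : ℕ).choose k : ℝ)) *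
      ∑ i ∈ range 3, ∑ j ∈ range 3,
        if i + j = k then ((2 : ℕ).choose i : ℝ) * ((2 : ℕ).choose j : ℝ) *
          cross2 (lam i) (rho j) else 0)
    (hlκ : ∑ i ∈ range 3, ((2 : ℕ).choose i : ℝ) * κ ^ i * l i = 0)
    (hrκ : ∑ i ∈ range 3, ((2 : ℕ).choose i : ℝ) * κ ^ i * r i = 0) :
    ∑ k ∈ range 5, ((4 : ℕ).choose k : ℝ) * κ ^ k * c k = 0 := by
  set L1 := (lam 0).1 + 2*κ*(lam 1).1 + κ^2*(lam 2).1 with hL1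
  set L2 := (lam 0).2 + 2*κ*(lam 1).2 + κ^2*(lam 2).2 with hL2
  set R1 := (rho 0).1 + 2*κ*(rho 1).1 + κ^2*(rho 2).1 with hR1
  set R2 := (rho 0).2 + 2*κ*(rho 1).2 + κ^2*(rho 2).2 with hR2
  have hL : L1 * d.2 - L2 * d.1 = 0 := by
    simp only [Finset.sum_range_succ, Finset.sum_range_zero, hr 0 (by norm_num),
      hr 1 (by norm_num), hr 2 (by norm_num), cross2] at hrκ
    norm_num [Nat.choose] at hrκ
    linear_combination -hrκ
  have hR : R1 * d.2 - R2 * d.1 = 0 := by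
    simp only [Finset.sum_range_succ, Finset.sum_range_zero, hl 0 (by norm_num),
      hl 1 (by norm_num), hl 2 (by norm_num), cross2] at hlκ
    norm_num [Nat.choose] at hlκ
    linear_combination hlκ
  have hdd : d.1 ≠ 0 ∨ d.2 ≠ 0 := by
    by_contra h
    push_neg at h
    exact hd (Prod.ext h.1 h.2)
  have key : L1 * R2 - L2 * R1 = 0 := by
    rcases hdd with h | h
    · have : d.1 * (L1 * R2 - L2 * R1) = 0 := by linear_combination R1 * hL - L1 * hR
      exact (mul_eq_zero.mp this).resolve_left h
    · have : d.2 * (L1 * R2 - L2 * R1) = 0 := by linear_combination R2 * hL - L2 * hR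
      exact (mul_eq_zero.mp this).resolve_left h
  simp only [Finset.sum_range_succ, Finset.sum_range_zero, hc 0 (by norm_num),
    hc 1 (by norm_num), hc 2 (by norm_num), hc 3 (by norm_num), hc 4 (by norm_num), cross2]
  norm_num [Nat.choose]
  linear_combination key
end

section
/- Let n' ≥ 5 be an integer and let l₀, l₁, l₂, r₀, r₁, r₂ be reals with l₀ ≠ 0, r₀ ≠ 0, l₂ ≠ 0 and r₂ ≠ 0. Set g^{(ij)} = l_i·r_j − l_j·r_i for i,j ∈ {0,1,2}. Then there exists a family of reals α₂,…,α_{n'}, not all zero, satisfying α_s·l₀ + 2α_{s+1}·l₁ + α_{s+2}·l₂ = 0 and α_s·r₀ + 2α_{s+1}·r₁ + α_{s+2}·r₂ = 0 for every s = 2,…,n'−2, if and only if one of the following holds: (CASE 1) g^{(01)}, g^{(12)} and g^{(02)} are all nonzero and (g^{(02)})² = 4·g^{(01)}·g^{(12)}; or (CASE 2) g^{(01)} = g^{(12)} = g^{(02)} = 0. Moreover, in CASE 1 every such family satisfies α_{s+1} = κ·α_s for s = 2,…,n'−1, where κ = −2g^{(01)}/g^{(02)} = −g^{(02)}/(2g^{(12)});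 and in CASE 2 every such family satisfies α_{s+2} = −ξ·α_s − 2η·α_{s+1} for s = 2,…,n'−2, where ξ = l₀/l₂ = r₀/r₂ and η = l₁/l₂ = r₁/r₂. -/
/-- Auxiliary two-term recursion used to build a nontrivial family in CASE 2. -/
noncomputable def stmt19Aux (a b : ℝ) : ℕ → ℝ
  | 0 => 1
  | 1 => 0
  | n + 2 => a * stmt19Aux a b n + b * stmt19Aux a b (n + 1)

/-- The two eliminated relations obtained from one pair of equations. -/
lemma stmt19_rel {l0 l1 l2 r0 r1 r2 x y z : ℝ}
    (e1 : x * l0 + 2 * y * l1 + z * l2 = 0)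
    (e2 : x * r0 + 2 * y * r1 + z * r2 = 0) :
    (l0*r2 - l2*r0) * x + 2 * (l1*r2 - l2*r1) * y = 0 ∧
    2 * (l0*r1 - l1*r0) * y + (l0*r2 - l2*r0) * z = 0 := by
  constructor
  · linear_combination r2 * e1 - l2 * e2
  · linear_combination l0 * e2 - r0 * e1

/-- κ is a common root of both weight quadratics. -/
lemma stmt19_root {l0 l1 l2 r0 r1 r2 : ℝ} (hB : l1*r2 - l2*r1 ≠ 0)
    (hQ : (l0*r2-l2*r0)^2 = 4*(l0*r1-l1*r0)*(l1*r2-l2*r1)) :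
    l0 + 2*l1*(-(l0*r2-l2*r0)/(2*(l1*r2-l2*r1))) + l2*(-(l0*r2-l2*r0)/(2*(l1*r2-l2*r1)))^2 = 0
    ∧ r0 + 2*r1*(-(l0*r2-l2*r0)/(2*(l1*r2-l2*r1))) + r2*(-(l0*r2-l2*r0)/(2*(l1*r2-l2*r1)))^2 = 0 := by
  have keyl : 4*(l1*r2-l2*r1)^2*l0 - 4*(l1*r2-l2*r1)*(l0*r2-l2*r0)*l1 + (l0*r2-l2*r0)^2*l2 = 0 := by
    linear_combination l2 * hQ
  have keyr : 4*(l1*r2-l2*r1)^2*r0 - 4*(l1*r2-l2*r1)*(l0*r2-l2*r0)*r1 + (l0*r2-l2*r0)^2*r2 = 0 := by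
    linear_combination r2 * hQ
  constructor
  · have h : l0 + 2*l1*(-(l0*r2-l2*r0)/(2*(l1*r2-l2*r1))) + l2*(-(l0*r2-l2*r0)/(2*(l1*r2-l2*r1)))^2
        = (4*(l1*r2-l2*r1)^2*l0 - 4*(l1*r2-l2*r1)*(l0*r2-l2*r0)*l1 + (l0*r2-l2*r0)^2*l2)/(4*(l1*r2-l2*r1)^2) := by
      field_simp
      ring
    rw [h, keyl, zero_div]
  · have h : r0 + 2*r1*(-(l0*r2-l2*r0)/(2*(l1*r2-l2*r1))) + r2*(-(l0*r2-l2*r0)/(2*(l1*r2-l2*r1)))^2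
        = (4*(l1*r2-l2*r1)^2*r0 - 4*(l1*r2-l2*r1)*(l0*r2-l2*r0)*r1 + (l0*r2-l2*r0)^2*r2)/(4*(l1*r2-l2*r1)^2) := by
      generalize l1*r2 - l2*r1 = D at hB ⊢
      field_simp
      ring
    rw [h, keyr, zero_div]

/-- Characterization of the existence of a nontrivial vanishing linear combination of the
rows of the "Restricted Middle" system (bicubic case), together with the explicit
recursions the coefficients of any such family satisfy, in terms of
`g^(ij) = l_i r_j − l_j r_i`. -/
theorem stmt19 (n' : ℕ) (hn : 5 ≤ n')
    (l0 l1 l2 r0 r1 r2 : ℝ)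
    (hl0 : l0 ≠ 0) (hr0 : r0 ≠ 0) (hl2 : l2 ≠ 0) (hr2 : r2 ≠ 0) :
    ((∃ α : ℕ → ℝ,
        (∃ s, 2 ≤ s ∧ s ≤ n' ∧ α s ≠ 0) ∧
        (∀ s, 2 ≤ s → s ≤ n' - 2 →
          α s * l0 + 2 * α (s + 1) * l1 + α (s + 2) * l2 = 0 ∧
          α s * r0 + 2 * α (s + 1) * r1 + α (s + 2) * r2 = 0))
      ↔
      ((l0 * r1 - l1 * r0 ≠ 0 ∧ l1 * r2 - l2 * r1 ≠ 0 ∧ l0 * r2 - l2 * r0 ≠ 0 ∧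
          (l0 * r2 - l2 * r0) ^ 2 = 4 * (l0 * r1 - l1 * r0) * (l1 * r2 - l2 * r1))
        ∨ (l0 * r1 - l1 * r0 = 0 ∧ l1 * r2 - l2 * r1 = 0 ∧ l0 * r2 - l2 * r0 = 0)))
    ∧
    ((l0 * r1 - l1 * r0 ≠ 0 ∧ l1 * r2 - l2 * r1 ≠ 0 ∧ l0 * r2 - l2 * r0 ≠ 0 ∧
        (l0 * r2 - l2 * r0) ^ 2 = 4 * (l0 * r1 - l1 * r0) * (l1 * r2 - l2 * r1)) →
      (-(2 * (l0 * r1 - l1 * r0)) / (l0 * r2 - l2 * r0)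
          = -(l0 * r2 - l2 * r0) / (2 * (l1 * r2 - l2 * r1))) ∧
      ∀ α : ℕ → ℝ,
        (∃ s, 2 ≤ s ∧ s ≤ n' ∧ α s ≠ 0) →
        (∀ s, 2 ≤ s → s ≤ n' - 2 →
          α s * l0 + 2 * α (s + 1) * l1 + α (s + 2) * l2 = 0 ∧
          α s * r0 + 2 * α (s + 1) * r1 + α (s + 2) * r2 = 0) →
        ∀ s, 2 ≤ s → s ≤ n' - 1 →
          α (s + 1) = (-(2 * (l0 * r1 - l1 * r0)) / (l0 * r2 - l2 * r0)) * α s)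
    ∧
    ((l0 * r1 - l1 * r0 = 0 ∧ l1 * r2 - l2 * r1 = 0 ∧ l0 * r2 - l2 * r0 = 0) →
      (l0 / l2 = r0 / r2 ∧ l1 / l2 = r1 / r2) ∧
      ∀ α : ℕ → ℝ,
        (∃ s, 2 ≤ s ∧ s ≤ n' ∧ α s ≠ 0) →
        (∀ s, 2 ≤ s → s ≤ n' - 2 →
          α s * l0 + 2 * α (s + 1) * l1 + α (s + 2) * l2 = 0 ∧
          α s * r0 + 2 * α (s + 1) * r1 + α (s + 2) * r2 = 0) →
        ∀ s, 2 ≤ s → s ≤ n' - 2 →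
          α (s + 2) = -(l0 / l2) * α s - 2 * (l1 / l2) * α (s + 1)) := by
  obtain ⟨k, rfl⟩ : ∃ k, n' = 5 + k := ⟨n' - 5, by omega⟩
  refine ⟨?_, ?_, ?_⟩
  · -- Part 1 : the iff
    constructor
    · -- forward direction
      rintro ⟨α, ⟨s0, hs01, hs02, hs0ne⟩, heq⟩
      have hic : ∀ a b : ℕ, a = b → α a = α b := fun a b h => by rw [h]
      have hArel : ∀ s, 2 ≤ s → s ≤ 3 + k →
          (l0*r2 - l2*r0) * α s + 2 * (l1*r2 - l2*r1) * α (s+1) = 0 := by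
        intro s h1 h2
        obtain ⟨e1, e2⟩ := heq s h1 (by omega)
        exact (stmt19_rel e1 e2).1
      have hBrel : ∀ s, 2 ≤ s → s ≤ 3 + k →
          2 * (l0*r1 - l1*r0) * α (s+1) + (l0*r2 - l2*r0) * α (s+2) = 0 := by
        intro s h1 h2
        obtain ⟨e1, e2⟩ := heq s h1 (by omega)
        exact (stmt19_rel e1 e2).2
      -- helper: kill the last two entries knowing the middle ones vanish
      have hlast : ∀ s, 2 ≤ s → s ≤ 3 + k → α s = 0 → α (s+1) = 0 → α (s+2) = 0 := by
        intro s h1 h2 hz1 hz2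
        have e1 := (heq s h1 (by omega)).1
        rw [hz1, hz2] at e1
        have : α (s+2) * l2 = 0 := by linarith
        exact (mul_eq_zero.mp this).resolve_right hl2
      by_cases hC : l0 * r2 - l2 * r0 = 0
      · by_cases hAB : l0 * r1 - l1 * r0 = 0 ∧ l1 * r2 - l2 * r1 = 0
        · exact Or.inr ⟨hAB.1, hAB.2, hC⟩
        · -- C = 0 but A ≠ 0 or B ≠ 0 : contradiction
          exfalso
          have hmid : ∀ s, 2 ≤ s → s ≤ 3 + k → α (s+1) = 0 := by
            intro s h1 h2
            rcases Decidable.not_and_iff_or_not.mp hAB with hA | hB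
            · have h := hBrel s h1 h2
              rw [hC] at h
              have : (2 * (l0*r1 - l1*r0)) * α (s+1) = 0 := by linarith
              exact (mul_eq_zero.mp this).resolve_left
                (mul_ne_zero two_ne_zero hA)
            · have h := hArel s h1 h2
              rw [hC] at h
              have : (2 * (l1*r2 - l2*r1)) * α (s+1) = 0 := by linarith
              exact (mul_eq_zero.mp this).resolve_left
                (mul_ne_zero two_ne_zero hB)
          have hmid' : ∀ t, 3 ≤ t → t ≤ 4 + k → α t = 0 := by
            intro t h1 h2
            obtain ⟨s, rfl⟩ : ∃ s, t = s + 1 := ⟨t - 1, by omega⟩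
            exact hmid s (by omega) (by omega)
          have h2z : α 2 = 0 := by
            have e1 := (heq 2 (by omega) (by omega)).1
            rw [hmid' (2+1) (by omega) (by omega), hmid' (2+2) (by omega) (by omega)] at e1
            have : α 2 * l0 = 0 := by linarith
            exact (mul_eq_zero.mp this).resolve_right hl0
          have hlastz : α (3+k+2) = 0 := by
            have e1 := (heq (3+k) (by omega) (by omega)).1
            rw [hmid' (3+k) (by omega) (by omega), hmid' (3+k+1) (by omega) (by omega)] at e1
            have : α (3+k+2) * l2 = 0 := by linarith
            exact (mul_eq_zero.mp this).resolve_right hl2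
          apply hs0ne
          rcases (by omega : s0 = 2 ∨ (3 ≤ s0 ∧ s0 ≤ 4 + k) ∨ s0 = 3+k+2) with h | h | h
          · rw [h]; exact h2z
          · exact hmid' s0 h.1 h.2
          · rw [h]; exact hlastz
      · -- C ≠ 0
        have hB : l1 * r2 - l2 * r1 ≠ 0 := by
          intro hB
          have hz : ∀ s, 2 ≤ s → s ≤ 3 + k → α s = 0 := by
            intro s h1 h2
            have h := hArel s h1 h2
            rw [hB] at h
            have : (l0*r2 - l2*r0) * α s = 0 := by linarith
            exact (mul_eq_zero.mp this).resolve_left hC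
          have z4 : α (2+k+2) = 0 :=
            hlast (2+k) (by omega) (by omega) (hz _ (by omega) (by omega))
              (hz _ (by omega) (by omega))
          have z5 : α (3+k+2) = 0 := by
            refine hlast (3+k) (by omega) (by omega) (hz _ (by omega) (by omega)) ?_
            rw [hic (3+k+1) (2+k+2) (by omega)]
            exact z4
          apply hs0ne
          rcases (by omega : (2 ≤ s0 ∧ s0 ≤ 3 + k) ∨ s0 = 2+k+2 ∨ s0 = 3+k+2) with h | h | h
          · exact hz s0 h.1 h.2
          · rw [h]; exact z4
          · rw [h]; exact z5
        have hA : l0 * r1 - l1 * r0 ≠ 0 := by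
          intro hA
          have hz : ∀ s, 2 ≤ s → s ≤ 3 + k → α (s+2) = 0 := by
            intro s h1 h2
            have h := hBrel s h1 h2
            rw [hA] at h
            have : (l0*r2 - l2*r0) * α (s+2) = 0 := by linarith
            exact (mul_eq_zero.mp this).resolve_left hC
          have hz' : ∀ t, 4 ≤ t → t ≤ 5 + k → α t = 0 := by
            intro t h1 h2
            obtain ⟨s, rfl⟩ : ∃ s, t = s + 2 := ⟨t - 2, by omega⟩
            exact hz s (by omega) (by omega)
          have z3 : α 3 = 0 := by
            have h := hArel 3 (by omega) (by omega)
            rw [hz' (3+1) (by omega) (by omega)] at h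
            have : (l0*r2 - l2*r0) * α 3 = 0 := by linarith
            exact (mul_eq_zero.mp this).resolve_left hC
          have z2 : α 2 = 0 := by
            have h := hArel 2 (by omega) (by omega)
            rw [hic (2+1) 3 (by omega), z3] at h
            have : (l0*r2 - l2*r0) * α 2 = 0 := by linarith
            exact (mul_eq_zero.mp this).resolve_left hC
          apply hs0ne
          rcases (by omega : s0 = 2 ∨ s0 = 3 ∨ (4 ≤ s0 ∧ s0 ≤ 5 + k)) with h | h | h
          · rw [h]; exact z2
          · rw [h]; exact z3
          · exact hz' s0 h.1 h.2
        -- now A, B, C all nonzero; show the discriminant condition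
        left
        refine ⟨hA, hB, hC, ?_⟩
        have hα3 : α 3 ≠ 0 := by
          intro h3
          have z2 : α 2 = 0 := by
            have h := hArel 2 (by omega) (by omega)
            rw [hic (2+1) 3 (by omega), h3] at h
            have : (l0*r2 - l2*r0) * α 2 = 0 := by linarith
            exact (mul_eq_zero.mp this).resolve_left hC
          have chain : ∀ j, 3 + j ≤ 4 + k → α (3 + j) = 0 := by
            intro j
            induction j with
            | zero => intro _; exact h3
            | succ j ih =>
              intro hj
              have hz := ih (by omega)
              have h := hArel (3+j) (by omega) (by omega)
              rw [hz] at h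
              have h' : (2 * (l1*r2 - l2*r1)) * α (3+j+1) = 0 := by linarith
              have := (mul_eq_zero.mp h').resolve_left (mul_ne_zero two_ne_zero hB)
              rw [hic (3+(j+1)) (3+j+1) (by omega)]
              exact this
          have zlast : α (3+k+2) = 0 := by
            have h := hBrel (3+k) (by omega) (by omega)
            rw [hic (3+k+1) (3+(k+1)) (by omega), chain (k+1) (by omega)] at h
            have : (l0*r2 - l2*r0) * α (3+k+2) = 0 := by linarith
            exact (mul_eq_zero.mp this).resolve_left hC
          apply hs0ne
          rcases (by omega : s0 = 2 ∨ (3 ≤ s0 ∧ s0 ≤ 4 + k) ∨ s0 = 3+k+2) with h | h | h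
          · rw [h]; exact z2
          · rw [hic s0 (3 + (s0 - 3)) (by omega)]; exact chain (s0 - 3) (by omega)
          · rw [h]; exact zlast
        have h1 := hArel 3 (by omega) (by omega)
        have h2 := hBrel 2 (by omega) (by omega)
        rw [hic (2+1) 3 (by omega), hic (2+2) (3+1) (by omega)] at h2
        have key : ((l0*r2 - l2*r0)^2 - 4*(l0*r1 - l1*r0)*(l1*r2 - l2*r1)) * α 3 = 0 := by
          linear_combination (l0*r2 - l2*r0) * h1 - 2*(l1*r2 - l2*r1) * h2
        have := (mul_eq_zero.mp key).resolve_right hα3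
        linarith
    · -- backward direction : construct the family
      rintro (⟨hA, hB, hC, hQ⟩ | ⟨hA, hB, hC⟩)
      · -- CASE 1
        set κ : ℝ := -(l0*r2-l2*r0)/(2*(l1*r2-l2*r1)) with hκ
        have hκne : κ ≠ 0 := by
          rw [hκ]
          exact div_ne_zero (neg_ne_zero.mpr hC) (mul_ne_zero two_ne_zero hB)
        obtain ⟨hrl, hrr⟩ := stmt19_root hB hQ
        refine ⟨fun s => κ ^ s, ⟨2, le_refl 2, by omega, pow_ne_zero 2 hκne⟩, ?_⟩
        intro s _ _
        constructor
        · linear_combination (κ ^ s) * hrl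
        · linear_combination (κ ^ s) * hrr
      · -- CASE 2
        refine ⟨fun s => stmt19Aux (-(l0/l2)) (-(2*(l1/l2))) (s - 2),
          ⟨2, le_refl 2, by omega, by norm_num [stmt19Aux]⟩, ?_⟩
        intro s h1 h2
        obtain ⟨t, rfl⟩ : ∃ t, s = t + 2 := ⟨s - 2, by omega⟩
        dsimp only
        have i1 : t + 2 - 2 = t := by omega
        have i2 : t + 2 + 1 - 2 = t + 1 := by omega
        have i3 : t + 2 + 2 - 2 = t + 2 := by omega
        rw [i1, i2, i3]
        have hrec : stmt19Aux (-(l0/l2)) (-(2*(l1/l2))) (t+2)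
            = -(l0/l2) * stmt19Aux (-(l0/l2)) (-(2*(l1/l2))) t
              + -(2*(l1/l2)) * stmt19Aux (-(l0/l2)) (-(2*(l1/l2))) (t+1) := rfl
        rw [hrec]
        set x := stmt19Aux (-(l0/l2)) (-(2*(l1/l2))) t
        set y := stmt19Aux (-(l0/l2)) (-(2*(l1/l2))) (t+1)
        constructor
        · field_simp
          ring
        · field_simp
          linear_combination (-x) * hC - 2 * y * hB
  · -- Part 2 : CASE 1 recursion
    rintro ⟨hA, hB, hC, hQ⟩
    constructor
    · rw [div_eq_div_iff hC (mul_ne_zero two_ne_zero hB)]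
      linear_combination hQ
    · intro α _ heq s hs1 hs2
      have hic : ∀ a b : ℕ, a = b → α a = α b := fun a b h => by rw [h]
      have hArel : ∀ s, 2 ≤ s → s ≤ 3 + k →
          (l0*r2 - l2*r0) * α s + 2 * (l1*r2 - l2*r1) * α (s+1) = 0 := by
        intro s h1 h2
        obtain ⟨e1, e2⟩ := heq s h1 (by omega)
        exact (stmt19_rel e1 e2).1
      have hBrel : ∀ s, 2 ≤ s → s ≤ 3 + k →
          2 * (l0*r1 - l1*r0) * α (s+1) + (l0*r2 - l2*r0) * α (s+2) = 0 := by
        intro s h1 h2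
        obtain ⟨e1, e2⟩ := heq s h1 (by omega)
        exact (stmt19_rel e1 e2).2
      rcases (by omega : s = 2 ∨ 3 ≤ s) with h | h
      · subst h
        have ha := hArel 2 (by omega) (by omega)
        -- goal : α 3 = κ α 2 with κ = -(2A)/C
        have key : (2*(l1*r2-l2*r1)) *
            (α (2+1) * (l0*r2-l2*r0) + 2*(l0*r1-l1*r0) * α 2) = 0 := by
          linear_combination (l0*r2-l2*r0) * ha - α 2 * hQ
        have h0 := (mul_eq_zero.mp key).resolve_left (mul_ne_zero two_ne_zero hB)
        rw [div_mul_eq_mul_div, eq_div_iff hC]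
        linarith
      · obtain ⟨u, rfl⟩ : ∃ u, s = u + 1 := ⟨s - 1, by omega⟩
        have hb := hBrel u (by omega) (by omega)
        rw [hic (u+1+1) (u+2) (by omega)]
        rw [div_mul_eq_mul_div, eq_div_iff hC]
        linarith
  · -- Part 3 : CASE 2 recursion
    rintro ⟨hA, hB, hC⟩
    refine ⟨⟨?_, ?_⟩, ?_⟩
    · rw [div_eq_div_iff hl2 hr2]
      linear_combination hC
    · rw [div_eq_div_iff hl2 hr2]
      linear_combination hB
    · intro α _ heq s h1 h2
      have e1 := (heq s h1 h2).1
      field_simp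
      linear_combination e1
end
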